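/- arXiv:2601.21888 — 8 statements merged into one kernel-verified Lean document; each statement's English description precedes it below -/
import Mathlib

section
/- Let d ≥ 1 and let A, B be d×d integer matrices inducing endomorphisms α, β of the torus T^d = ℝ^d/ℤ^d. Suppose there is an invertible complex matrix P such that P⁻¹AP and P⁻¹BP are both upper triangular, with diagonal entries ξ_1, …, ξ_d and η_1, …, η_d respectively, and suppose |ξ_i| ≠ |η_i| for every 1 ≤ i ≤ d. Then for every n ≥ 1 the set S(α^n, β^n) is finite (so the pair (α, β) is synchronously tame), and the growth rate of synchronization points exists and is given by lim_{n→∞} (#S(α^n, β^n))^{1/n} = ∏_{i=1}^d max(|ξ_i|, |η_i|). Equivalently, lim_{n→∞} |det(A^n − B^n)|^{1/n} = ∏_{i=1}^d max(|ξ_i|, |η_i|). -/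
open Filter

/-- The subgroup `ℤ^d ⊆ ℝ^d` of vectors with integer coordinates. -/
def intLattice (d : ℕ) : AddSubgroup (Fin d → ℝ) where
  carrier := {x | ∀ i, ∃ m : ℤ, x i = (m : ℝ)}
  add_mem' := by
    rintro x y hx hy i
    obtain ⟨mx, hmx⟩ := hx i
    obtain ⟨my, hmy⟩ := hy i
    exact ⟨mx + my, by simp [hmx, hmy]⟩
  zero_mem' := fun i => ⟨0, by simp⟩
  neg_mem' := by
    rintro x hx i
    obtain ⟨m, hm⟩ := hx i
    exact ⟨-m, by simp [hm]⟩

/-- The `d`-dimensional torus `T^d = ℝ^d / ℤ^d`. -/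
abbrev Torus (d : ℕ) := (Fin d → ℝ) ⧸ intLattice d


open Matrix Real


lemma aux_root_one {u : ℕ → ℝ} {L : ℝ} (hL : 0 < L) (hu : Tendsto u atTop (nhds L)) :
    Tendsto (fun n : ℕ => u n ^ ((1 : ℝ) / n)) atTop (nhds 1) := by
  have hpos : ∀ᶠ n in atTop, 0 < u n := hu.eventually (eventually_gt_nhds hL)
  have hlog : Tendsto (fun n : ℕ => Real.log (u n) * ((1 : ℝ) / n)) atTop (nhds 0) := by
    have := (hu.log hL.ne').mul (tendsto_one_div_atTop_nhds_zero_nat)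
    simpa using this
  have hexp : Tendsto (fun n : ℕ => Real.exp (Real.log (u n) * ((1 : ℝ) / n))) atTop (nhds 1) := by
    simpa [Function.comp_def] using (Real.continuous_exp.tendsto 0).comp hlog
  refine hexp.congr' ?_
  filter_upwards [hpos] with n hn
  rw [Real.rpow_def_of_pos hn]

lemma root_tendsto {a b : ℝ} (hb : 0 ≤ b) (hab : b < a) (ε : ℝ) (hε : ε = 1 ∨ ε = -1) :
    Tendsto (fun n : ℕ => (a ^ n + ε * b ^ n) ^ ((1 : ℝ) / n)) atTop (nhds a) := by
  have ha : 0 < a := hb.trans_lt hab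
  set t : ℝ := b / a with ht
  have ht0 : 0 ≤ t := div_nonneg hb ha.le
  have ht1 : t < 1 := (div_lt_one ha).mpr hab
  have htpow : Tendsto (fun n : ℕ => t ^ n) atTop (nhds 0) :=
    tendsto_pow_atTop_nhds_zero_of_lt_one ht0 ht1
  have hu : Tendsto (fun n : ℕ => 1 + ε * t ^ n) atTop (nhds 1) := by
    have := (tendsto_const_nhds (x := (1:ℝ))).add ((tendsto_const_nhds (x := ε)).mul htpow)
    simpa using this
  have hroot := aux_root_one one_pos hu
  have := (tendsto_const_nhds (x := a)).mul hroot
  rw [mul_one] at this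
  refine this.congr' ?_
  filter_upwards [eventually_ge_atTop 1, hu.eventually (eventually_gt_nhds one_pos)]
    with n hn hupos
  have hfact : a ^ n + ε * b ^ n = a ^ n * (1 + ε * t ^ n) := by
    have h1 : a ^ n * t ^ n = b ^ n := by
      rw [ht, div_pow, mul_div_cancel₀]
      positivity
    rw [mul_add, mul_one, show a ^ n * (ε * t ^ n) = ε * (a ^ n * t ^ n) by ring, h1]
  rw [hfact, Real.mul_rpow (by positivity) (le_of_lt hupos), ← Real.rpow_natCast a n,
    ← Real.rpow_mul ha.le]
  have hn0 : (n : ℝ) ≠ 0 := Nat.cast_ne_zero.mpr (by omega)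
  rw [mul_one_div, div_self hn0, Real.rpow_one]

lemma abs_root_max (ξ η : ℂ) (h : ‖η‖ < ‖ξ‖) :
    Tendsto (fun n : ℕ => ‖ξ ^ n - η ^ n‖ ^ ((1 : ℝ) / n)) atTop
      (nhds (‖ξ‖)) := by
  set a := ‖ξ‖
  set b := ‖η‖
  have hb : 0 ≤ b := norm_nonneg _
  have hup := root_tendsto hb h 1 (Or.inl rfl)
  have hlow := root_tendsto hb h (-1) (Or.inr rfl)
  refine tendsto_of_tendsto_of_tendsto_of_le_of_le' hlow hup ?_ ?_
  · filter_upwards with n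
    have hexp : (0 : ℝ) ≤ 1 / n := by positivity
    refine Real.rpow_le_rpow (by nlinarith [pow_le_pow_left₀ hb h.le n]) ?_ hexp
    calc a ^ n + -1 * b ^ n = ‖ξ ^ n‖ - ‖η ^ n‖ := by
          simp [a, b]; ring
      _ ≤ ‖ξ ^ n - η ^ n‖ := by
          exact norm_sub_norm_le (ξ ^ n) (η ^ n)
  · filter_upwards with n
    have hexp : (0 : ℝ) ≤ 1 / n := by positivity
    refine Real.rpow_le_rpow (norm_nonneg _) ?_ hexp
    calc ‖ξ ^ n - η ^ n‖ ≤ ‖ξ ^ n‖ + ‖η ^ n‖ :=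
          by exact norm_sub_le (ξ ^ n) (η ^ n)
      _ = a ^ n + 1 * b ^ n := by simp [a, b]

lemma abs_root_max' (ξ η : ℂ) (h : ‖ξ‖ ≠ ‖η‖) :
    Tendsto (fun n : ℕ => ‖ξ ^ n - η ^ n‖ ^ ((1 : ℝ) / n)) atTop
      (nhds (max (‖ξ‖) (‖η‖))) := by
  rcases h.lt_or_gt with hlt | hlt
  · rw [max_eq_right hlt.le]
    have := abs_root_max η ξ hlt
    refine this.congr fun n => ?_
    rw [norm_sub_rev]
  · rw [max_eq_left hlt.le]
    exact abs_root_max ξ η hlt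


section MatrixAlgebra
variable {d : ℕ}

lemma mat_conj_pow (P X : Matrix (Fin d) (Fin d) ℂ) (hP : IsUnit P.det) (n : ℕ) :
    (P⁻¹ * X * P) ^ n = P⁻¹ * X ^ n * P := by
  induction n with
  | zero => simp [Matrix.nonsing_inv_mul P hP]
  | succ n ih =>
    rw [pow_succ, pow_succ, ih]
    have hP1 : P * P⁻¹ = 1 := Matrix.mul_nonsing_inv P hP
    simp only [Matrix.mul_assoc]
    rw [← Matrix.mul_assoc P P⁻¹, hP1, Matrix.one_mul]

lemma tri_diag_mul {M N : Matrix (Fin d) (Fin d) ℂ} (hM : M.BlockTriangular id)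
    (hN : N.BlockTriangular id) (i : Fin d) : (M * N) i i = M i i * N i i := by
  rw [Matrix.mul_apply]
  refine Finset.sum_eq_single i (fun b _ hb => ?_) (by simp)
  rcases lt_or_gt_of_ne hb with h | h
  · rw [hM h, zero_mul]
  · rw [hN h, mul_zero]

lemma tri_pow {M : Matrix (Fin d) (Fin d) ℂ} (hM : M.BlockTriangular id) (n : ℕ) :
    (M ^ n).BlockTriangular id ∧ ∀ i, (M ^ n) i i = M i i ^ n := by
  induction n with
  | zero => exact ⟨by simpa using Matrix.blockTriangular_one, fun i => by simp⟩
  | succ n ih =>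
    refine ⟨by rw [pow_succ]; exact ih.1.mul hM, fun i => ?_⟩
    rw [pow_succ, tri_diag_mul ih.1 hM, ih.2, pow_succ]

end MatrixAlgebra


lemma index_range_eq_natAbs_det (d : ℕ) (M : Matrix (Fin d) (Fin d) ℤ) (hM : M.det ≠ 0) :
    (LinearMap.range (Matrix.toLin' M)).toAddSubgroup.index = M.det.natAbs := by
  classical
  have hinj : Function.Injective (Matrix.toLin' M) := by
    rw [← LinearMap.ker_eq_bot]
    rw [Submodule.eq_bot_iff]
    intro v hv
    rw [LinearMap.mem_ker] at hv
    have h1 : (M.adjugate * M).mulVec v = M.det • v := by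
      rw [Matrix.adjugate_mul, Matrix.smul_mulVec, Matrix.one_mulVec]
    rw [← Matrix.mulVec_mulVec] at h1
    have h2 : Matrix.toLin' M v = M.mulVec v := Matrix.toLin'_apply M v
    rw [h2] at hv
    rw [hv, Matrix.mulVec_zero] at h1
    funext i
    have := congrFun h1.symm i
    simp only [Pi.smul_apply, smul_eq_mul, Pi.zero_apply] at this
    exact (mul_eq_zero.mp this).resolve_left hM
  set N := LinearMap.range (Matrix.toLin' M) with hN
  obtain ⟨n, snf⟩ := N.smithNormalForm (Pi.basisFun ℤ (Fin d))
  let eN : (Fin d → ℤ) ≃ₗ[ℤ] N := LinearEquiv.ofInjective (Matrix.toLin' M) hinj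
  have hnd : n = d := by
    have e2 : Fin n ≃ Fin d := snf.bN.indexEquiv ((Pi.basisFun ℤ (Fin d)).map eN)
    simpa using Fintype.card_congr e2
  subst hnd
  have hfbij : Function.Bijective snf.f :=
    (Fintype.bijective_iff_injective_and_card snf.f).mpr ⟨snf.f.injective, by simp⟩
  set σ : Fin n ≃ Fin n := Equiv.ofBijective snf.f hfbij with hσ
  rw [snf.toAddSubgroup_index_eq_pow_mul_prod]
  simp only [Fintype.card_fin, Nat.sub_self, pow_zero, one_mul,
    Ideal.span_singleton_toAddSubgroup_eq_zmultiples, Int.index_zmultiples]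
  -- now: ∏ i, (snf.a i).natAbs = M.det.natAbs
  set g : (Fin n → ℤ) →ₗ[ℤ] (Fin n → ℤ) :=
    (N.subtype) ∘ₗ ((snf.bM.equiv snf.bN σ.symm : (Fin n → ℤ) ≃ₗ[ℤ] N) :
      (Fin n → ℤ) →ₗ[ℤ] N) with hg
  have hgb : ∀ j, g (snf.bM j) = snf.a (σ.symm j) • snf.bM j := by
    intro j
    rw [hg]
    simp only [LinearMap.comp_apply, LinearEquiv.coe_coe, Module.Basis.equiv_apply,
      Submodule.coe_subtype]
    rw [snf.snf]
    congr 1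
    show snf.bM (σ (σ.symm j)) = snf.bM j
    rw [Equiv.apply_symm_apply]
  have hdetg : LinearMap.det g = ∏ j, snf.a (σ.symm j) := by
    rw [← LinearMap.det_toMatrix snf.bM]
    have : LinearMap.toMatrix snf.bM snf.bM g = Matrix.diagonal (fun j => snf.a (σ.symm j)) := by
      ext i j
      rw [LinearMap.toMatrix_apply, hgb, _root_.map_smul, Module.Basis.repr_self, Finsupp.smul_single,
        smul_eq_mul, mul_one]
      by_cases h : i = j
      · rw [h, Matrix.diagonal_apply_eq, Finsupp.single_eq_same]
      · rw [Matrix.diagonal_apply_ne _ h, Finsupp.single_eq_of_ne h]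
    rw [this, Matrix.det_diagonal]
  have hcomp : (N.subtype) ∘ₗ (eN : (Fin n → ℤ) →ₗ[ℤ] N) = Matrix.toLin' M := by
    refine LinearMap.ext fun v => ?_
    show ((LinearEquiv.ofInjective (Matrix.toLin' M) hinj) v : Fin n → ℤ) = Matrix.toLin' M v
    exact LinearEquiv.ofInjective_apply (f := Matrix.toLin' M) (h := hinj) v
  have hassoc : Associated (LinearMap.det g) M.det := by
    have h := LinearMap.associated_det_comp_equiv (N.subtype) (snf.bM.equiv snf.bN σ.symm) eN
    rw [hcomp, LinearMap.det_toLin'] at h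
    exact h
  have : (LinearMap.det g).natAbs = M.det.natAbs :=
    Int.natAbs_eq_iff_associated.mpr hassoc
  rw [hdetg] at this
  calc ∏ x, (snf.a x).natAbs
      = ∏ j, (snf.a (σ.symm j)).natAbs :=
        (Equiv.prod_comp σ.symm fun i => (snf.a i).natAbs).symm
    _ = (∏ j, snf.a (σ.symm j)).natAbs := (map_prod Int.natAbsHom _ _).symm
    _ = M.det.natAbs := this

noncomputable section

def castVec (d : ℕ) (w : Fin d → ℤ) : Fin d → ℝ := fun i => (w i : ℝ)

lemma castVec_mem (d : ℕ) (w : Fin d → ℤ) : castVec d w ∈ intLattice d :=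
  fun i => ⟨w i, rfl⟩

lemma mem_iff_castVec (d : ℕ) (u : Fin d → ℝ) :
    u ∈ intLattice d ↔ ∃ w : Fin d → ℤ, castVec d w = u := by
  constructor
  · intro h
    exact ⟨fun i => (h i).choose, funext fun i => ((h i).choose_spec).symm⟩
  · rintro ⟨w, rfl⟩
    exact castVec_mem d w

lemma castVec_injective (d : ℕ) : Function.Injective (castVec d) := by
  intro w w' h
  funext i
  exact Int.cast_injective (congrFun h i)

lemma mulVec_castVec (d : ℕ) (M : Matrix (Fin d) (Fin d) ℤ) (w : Fin d → ℤ) :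
    (M.map (Int.cast : ℤ → ℝ)).mulVec (castVec d w) = castVec d (M.mulVec w) := by
  funext i
  simp only [Matrix.mulVec, dotProduct, Matrix.map_apply, castVec]
  push_cast
  rfl


lemma int_mulVec_lattice (d : ℕ) (C : Matrix (Fin d) (Fin d) ℤ) {l : Fin d → ℝ}
    (hl : l ∈ intLattice d) :
    (C.map (Int.cast : ℤ → ℝ)).mulVec l ∈ intLattice d := by
  obtain ⟨w, rfl⟩ := (mem_iff_castVec d l).mp hl
  rw [mulVec_castVec]
  exact castVec_mem d _

lemma card_torus_ker (d : ℕ) (M : Matrix (Fin d) (Fin d) ℤ) (hM : M.det ≠ 0) :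
    Nat.card {x : Torus d | ∃ v : Fin d → ℝ, QuotientAddGroup.mk v = x ∧
      (M.map (Int.cast : ℤ → ℝ)).mulVec v ∈ intLattice d} = M.det.natAbs := by
  classical
  set R := M.map (Int.cast : ℤ → ℝ) with hR
  have hdetR : R.det = (M.det : ℝ) := by
    rw [hR]
    have := (Int.castRingHom ℝ).map_det M
    simpa using this.symm
  have hRunit : IsUnit R.det := by
    rw [hdetR]
    exact isUnit_iff_ne_zero.mpr (by exact_mod_cast hM)
  have hRinvR : ∀ v : Fin d → ℝ, R⁻¹.mulVec (R.mulVec v) = v := by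
    intro v
    rw [Matrix.mulVec_mulVec, Matrix.nonsing_inv_mul _ hRunit, Matrix.one_mulVec]
  have hRRinv : ∀ u : Fin d → ℝ, R.mulVec (R⁻¹.mulVec u) = u := by
    intro u
    rw [Matrix.mulVec_mulVec, Matrix.mul_nonsing_inv _ hRunit, Matrix.one_mulVec]
  set θ : (Fin d → ℤ) →+ Torus d :=
    AddMonoidHom.mk' (fun w => QuotientAddGroup.mk (R⁻¹.mulVec (castVec d w)))
      (by
        intro w w'
        have hcv : castVec d (w + w') = castVec d w + castVec d w' := by
          funext i; simp [castVec]
        show QuotientAddGroup.mk (R⁻¹ *ᵥ castVec d (w + w')) = _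
        rw [hcv, Matrix.mulVec_add]
        rfl) with hθ
  have hrange : (Set.range θ) = {x : Torus d | ∃ v : Fin d → ℝ, QuotientAddGroup.mk v = x ∧
      R.mulVec v ∈ intLattice d} := by
    ext x
    constructor
    · rintro ⟨w, rfl⟩
      refine ⟨R⁻¹.mulVec (castVec d w), rfl, ?_⟩
      rw [hRRinv]
      exact castVec_mem d w
    · rintro ⟨v, rfl, hlat⟩
      obtain ⟨w, hw⟩ := (mem_iff_castVec d _).mp hlat
      refine ⟨w, ?_⟩
      show QuotientAddGroup.mk (R⁻¹.mulVec (castVec d w)) = _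
      rw [hw, hRinvR]
  have hker : θ.ker = (LinearMap.range (Matrix.toLin' M)).toAddSubgroup := by
    ext w
    simp only [AddMonoidHom.mem_ker, Submodule.mem_toAddSubgroup, LinearMap.mem_range]
    constructor
    · intro h
      have h0 : R⁻¹.mulVec (castVec d w) ∈ intLattice d :=
        (QuotientAddGroup.eq_zero_iff _).mp h
      obtain ⟨u, hu⟩ := (mem_iff_castVec d _).mp h0
      refine ⟨u, ?_⟩
      have : R.mulVec (castVec d u) = castVec d w := by
        rw [hu, hRRinv]
      rw [mulVec_castVec] at this
      have := castVec_injective d this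
      rw [Matrix.toLin'_apply, this]
    · rintro ⟨u, rfl⟩
      show QuotientAddGroup.mk (R⁻¹.mulVec (castVec d (Matrix.toLin' M u))) = 0
      rw [Matrix.toLin'_apply, ← mulVec_castVec, hRinvR]
      exact (QuotientAddGroup.eq_zero_iff _).mpr (castVec_mem d u)
  have hcard1 : Nat.card {x : Torus d | ∃ v : Fin d → ℝ, QuotientAddGroup.mk v = x ∧
      R.mulVec v ∈ intLattice d} = Nat.card ((Fin d → ℤ) ⧸ θ.ker) := by
    rw [← hrange]
    have e := QuotientAddGroup.quotientKerEquivRange θ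
    have : (Set.range θ) = (θ.range : Set (Torus d)) := (AddMonoidHom.coe_range θ).symm
    rw [this]
    exact (Nat.card_congr e.toEquiv).symm
  rw [hcard1, ← AddSubgroup.index_eq_card, hker]
  exact index_range_eq_natAbs_det d M hM

end

/-- Let `d ≥ 1` and let `A, B` be `d×d` integer matrices inducing
endomorphisms `α, β` of the torus `T^d = ℝ^d/ℤ^d`. Suppose there is an invertible complex
matrix `P` such that `P⁻¹AP` and `P⁻¹BP` are both upper triangular, with diagonal entries
`ξ₁, …, ξ_d` and `η₁, …, η_d` respectively, and suppose `|ξ_i| ≠ |η_i|` for every `i`.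
Then for every `n ≥ 1` the set `S(α^n, β^n)` is finite (the pair `(α, β)` is synchronously
tame), the growth rate of synchronization points exists and equals
`lim (#S(α^n, β^n))^{1/n} = ∏ max (|ξ_i|, |η_i|)`; equivalently
`lim |det(A^n − B^n)|^{1/n} = ∏ max (|ξ_i|, |η_i|)`. -/
theorem growth_rate_synchronization_points_torus
    (d : ℕ) (hd : 1 ≤ d) (A B : Matrix (Fin d) (Fin d) ℤ)
    (α β : Torus d → Torus d)
    (hα : ∀ x : Fin d → ℝ, α (QuotientAddGroup.mk x) =
      QuotientAddGroup.mk ((A.map (Int.cast : ℤ → ℝ)).mulVec x))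
    (hβ : ∀ x : Fin d → ℝ, β (QuotientAddGroup.mk x) =
      QuotientAddGroup.mk ((B.map (Int.cast : ℤ → ℝ)).mulVec x))
    (P : Matrix (Fin d) (Fin d) ℂ) (hP : IsUnit P.det)
    (ξ η : Fin d → ℂ)
    (hAtri : (P⁻¹ * A.map (Int.cast : ℤ → ℂ) * P).BlockTriangular id)
    (hBtri : (P⁻¹ * B.map (Int.cast : ℤ → ℂ) * P).BlockTriangular id)
    (hAdiag : ∀ i, (P⁻¹ * A.map (Int.cast : ℤ → ℂ) * P) i i = ξ i)
    (hBdiag : ∀ i, (P⁻¹ * B.map (Int.cast : ℤ → ℂ) * P) i i = η i)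
    (habs : ∀ i, ‖ξ i‖ ≠ ‖η i‖) :
    (∀ n : ℕ, 1 ≤ n → {x : Torus d | α^[n] x = β^[n] x}.Finite) ∧
    Tendsto (fun n : ℕ =>
        (Nat.card {x : Torus d | α^[n] x = β^[n] x} : ℝ) ^ ((1 : ℝ) / n))
      atTop (nhds (∏ i, max (‖ξ i‖) (‖η i‖))) ∧
    Tendsto (fun n : ℕ =>
        (((A ^ n - B ^ n).det.natAbs : ℝ)) ^ ((1 : ℝ) / n))
      atTop (nhds (∏ i, max (‖ξ i‖) (‖η i‖))) := by
  classical
  set Ac := A.map (Int.cast : ℤ → ℂ) with hAc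
  set Bc := B.map (Int.cast : ℤ → ℂ) with hBc
  set A' := P⁻¹ * Ac * P with hA'
  set B' := P⁻¹ * Bc * P with hB'
  set Aℝ := A.map (Int.cast : ℤ → ℝ) with hAR
  set Bℝ := B.map (Int.cast : ℤ → ℝ) with hBR
  have hPd : P.det ≠ 0 := hP.ne_zero
  -- the determinant identity over ℂ
  have key : ∀ n : ℕ, (((A ^ n - B ^ n).det : ℤ) : ℂ) = ∏ i, (ξ i ^ n - η i ^ n) := by
    intro n
    have h1 : ∀ (C : Matrix (Fin d) (Fin d) ℤ), C.map (Int.cast : ℤ → ℂ) =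
        (Int.castRingHom ℂ).mapMatrix C := fun C => rfl
    have hmap : ((A ^ n - B ^ n).map (Int.cast : ℤ → ℂ)) = Ac ^ n - Bc ^ n := by
      rw [h1, map_sub, map_pow, map_pow, hAc, hBc, h1, h1]
    have hdet1 : (((A ^ n - B ^ n).det : ℤ) : ℂ) = (Ac ^ n - Bc ^ n).det := by
      rw [← hmap]
      exact (Int.castRingHom ℂ).map_det _
    have hconj : P⁻¹ * (Ac ^ n - Bc ^ n) * P = A' ^ n - B' ^ n := by
      rw [hA', hB', mat_conj_pow _ _ hP, mat_conj_pow _ _ hP, Matrix.mul_sub, Matrix.sub_mul]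
    have hdet2 : (Ac ^ n - Bc ^ n).det = (A' ^ n - B' ^ n).det := by
      rw [← hconj, Matrix.det_mul, Matrix.det_mul, Matrix.det_nonsing_inv,
        Ring.inverse_eq_inv']
      field_simp
    have htriA := tri_pow (M := A') hAtri n
    have htriB := tri_pow (M := B') hBtri n
    have htri : (A' ^ n - B' ^ n).BlockTriangular id := htriA.1.sub htriB.1
    rw [hdet1, hdet2, Matrix.det_of_upperTriangular htri]
    refine Finset.prod_congr rfl fun i _ => ?_
    rw [Matrix.sub_apply, htriA.2, htriB.2, hAdiag, hBdiag]
  have keyabs : ∀ n : ℕ, ((A ^ n - B ^ n).det.natAbs : ℝ) =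
      ∏ i, ‖ξ i ^ n - η i ^ n‖ := by
    intro n
    have h1 : ((A ^ n - B ^ n).det.natAbs : ℝ) =
        ‖(((A ^ n - B ^ n).det : ℤ) : ℂ)‖ := by
      rw [Complex.norm_intCast, Nat.cast_natAbs]
      exact Int.cast_abs
    rw [h1, key n, norm_prod]
  have hfac : ∀ n : ℕ, 1 ≤ n → ∀ i, ξ i ^ n - η i ^ n ≠ 0 := by
    intro n hn i
    refine sub_ne_zero.mpr fun hEq => ?_
    have h2 := congrArg (‖·‖) hEq
    rw [norm_pow, norm_pow] at h2
    rcases (habs i).lt_or_gt with hlt | hlt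
    · exact absurd h2
        (ne_of_lt (pow_lt_pow_left₀ hlt (norm_nonneg _) (Nat.one_le_iff_ne_zero.mp hn)))
    · exact absurd h2.symm
        (ne_of_lt (pow_lt_pow_left₀ hlt (norm_nonneg _) (Nat.one_le_iff_ne_zero.mp hn)))
  have hdetne : ∀ n : ℕ, 1 ≤ n → (A ^ n - B ^ n).det ≠ 0 := by
    intro n hn h0
    have hk := key n
    rw [h0] at hk
    simp only [Int.cast_zero] at hk
    exact (Finset.prod_ne_zero_iff.mpr fun i _ => hfac n hn i) hk.symm
  -- iterates of α and β
  have hiterα : ∀ (n : ℕ) (v : Fin d → ℝ),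
      α^[n] (QuotientAddGroup.mk v) = QuotientAddGroup.mk ((Aℝ ^ n).mulVec v) := by
    intro n
    induction n with
    | zero => intro v; simp [Matrix.one_mulVec]
    | succ n ih =>
      intro v
      rw [Function.iterate_succ_apply, hα v, ih, Matrix.mulVec_mulVec, ← pow_succ]
  have hiterβ : ∀ (n : ℕ) (v : Fin d → ℝ),
      β^[n] (QuotientAddGroup.mk v) = QuotientAddGroup.mk ((Bℝ ^ n).mulVec v) := by
    intro n
    induction n with
    | zero => intro v; simp [Matrix.one_mulVec]
    | succ n ih =>
      intro v
      rw [Function.iterate_succ_apply, hβ v, ih, Matrix.mulVec_mulVec, ← pow_succ]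
  -- the synchronization set as a kernel
  have h1R : ∀ (C : Matrix (Fin d) (Fin d) ℤ), C.map (Int.cast : ℤ → ℝ) =
      (Int.castRingHom ℝ).mapMatrix C := fun C => rfl
  have hmapR : ∀ n : ℕ, ((A ^ n - B ^ n).map (Int.cast : ℤ → ℝ)) = Aℝ ^ n - Bℝ ^ n := by
    intro n
    rw [h1R, map_sub, map_pow, map_pow, hAR, hBR, h1R, h1R]
  have hmapRA : ∀ n : ℕ, ((A ^ n).map (Int.cast : ℤ → ℝ)) = Aℝ ^ n := by
    intro n; rw [h1R, map_pow, hAR, h1R]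
  have hmapRB : ∀ n : ℕ, ((B ^ n).map (Int.cast : ℤ → ℝ)) = Bℝ ^ n := by
    intro n; rw [h1R, map_pow, hBR, h1R]
  have hsets : ∀ n : ℕ, {x : Torus d | α^[n] x = β^[n] x} =
      {x : Torus d | ∃ v : Fin d → ℝ, QuotientAddGroup.mk v = x ∧
        ((A ^ n - B ^ n).map (Int.cast : ℤ → ℝ)).mulVec v ∈ intLattice d} := by
    intro n
    ext x
    obtain ⟨v, rfl⟩ := QuotientAddGroup.mk_surjective x
    simp only [Set.mem_setOf_eq]
    rw [hiterα, hiterβ]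
    constructor
    · intro h
      refine ⟨v, rfl, ?_⟩
      rw [hmapR, Matrix.sub_mulVec]
      have h2 := QuotientAddGroup.eq.mp h
      have h3 := neg_mem h2
      have h4 : -(-((Aℝ ^ n).mulVec v) + (Bℝ ^ n).mulVec v) =
          (Aℝ ^ n).mulVec v - (Bℝ ^ n).mulVec v := by abel
      rwa [h4] at h3
    · rintro ⟨w, hw, hlat⟩
      rw [QuotientAddGroup.eq]
      have hl : -w + v ∈ intLattice d := QuotientAddGroup.eq.mp hw
      have hAl : (Aℝ ^ n).mulVec (-w + v) ∈ intLattice d := by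
        rw [← hmapRA n]
        exact int_mulVec_lattice d (A ^ n) hl
      have hBl : (Bℝ ^ n).mulVec (-w + v) ∈ intLattice d := by
        rw [← hmapRB n]
        exact int_mulVec_lattice d (B ^ n) hl
      have hw' : (Aℝ ^ n).mulVec w - (Bℝ ^ n).mulVec w ∈ intLattice d := by
        rw [hmapR, Matrix.sub_mulVec] at hlat
        exact hlat
      have hexp : ∀ (C : Matrix (Fin d) (Fin d) ℝ),
          C.mulVec (-w + v) = -C.mulVec w + C.mulVec v := by
        intro C
        rw [Matrix.mulVec_add, Matrix.mulVec_neg]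
      have heq : -((Aℝ ^ n).mulVec v) + (Bℝ ^ n).mulVec v =
          -((Aℝ ^ n).mulVec w - (Bℝ ^ n).mulVec w) +
            ((Bℝ ^ n).mulVec (-w + v) - (Aℝ ^ n).mulVec (-w + v)) := by
        rw [hexp, hexp]
        abel
      rw [heq]
      exact add_mem (neg_mem hw') (sub_mem hBl hAl)
  have hcard : ∀ n : ℕ, 1 ≤ n →
      Nat.card {x : Torus d | α^[n] x = β^[n] x} = (A ^ n - B ^ n).det.natAbs := by
    intro n hn
    rw [hsets n]
    exact card_torus_ker d _ (hdetne n hn)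
  -- the third limit
  have hlim3 : Tendsto (fun n : ℕ => (((A ^ n - B ^ n).det.natAbs : ℝ)) ^ ((1 : ℝ) / n))
      atTop (nhds (∏ i, max (‖ξ i‖) (‖η i‖))) := by
    have hprod : Tendsto
        (fun n : ℕ => ∏ i, ‖ξ i ^ n - η i ^ n‖ ^ ((1 : ℝ) / n))
        atTop (nhds (∏ i, max (‖ξ i‖) (‖η i‖))) :=
      tendsto_finset_prod _ fun i _ => abs_root_max' (ξ i) (η i) (habs i)
    refine hprod.congr fun n => ?_
    rw [keyabs n, ← Real.finset_prod_rpow _ _ (fun i _ => norm_nonneg _) _]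
  have hlim2 : Tendsto (fun n : ℕ =>
      (Nat.card {x : Torus d | α^[n] x = β^[n] x} : ℝ) ^ ((1 : ℝ) / n))
      atTop (nhds (∏ i, max (‖ξ i‖) (‖η i‖))) := by
    refine hlim3.congr' ?_
    filter_upwards [eventually_ge_atTop 1] with n hn
    rw [hcard n hn]
  refine ⟨?_, hlim2, hlim3⟩
  intro n hn
  rw [← Set.finite_coe_iff]
  refine Nat.finite_of_card_ne_zero ?_
  rw [hcard n hn]
  exact_mod_cast Int.natAbs_ne_zero.mpr (hdetne n hn)
end

section
/- Let p be a prime and let ξ ∈ ℚ_p be a p-adic number with |ξ|_p = 1 which is not a root of unity (i.e. ξ^m ≠ 1 for every m ≥ 1). Then there exists a constant C > 0, independent of n, such that for every n ≥ 1 one has 1/n ≤ C · |ξ^n − 1|_p. -/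
open Finset

section PadicAux

variable {p : ℕ} [hp : Fact p.Prime]

private lemma aux_pow_sub_one_le (a : ℚ_[p]) (ha : ‖a‖ ≤ 1) (k : ℕ) :
    ‖a ^ k - 1‖ ≤ ‖a - 1‖ := by
  rw [← geom_sum_mul, norm_mul]
  have h1 : ‖∑ i ∈ range k, a ^ i‖ ≤ 1 :=
    IsUltrametricDist.norm_sum_le_of_forall_le_of_nonneg zero_le_one
      (fun i _ => by simpa using pow_le_one₀ (norm_nonneg a) ha)
  calc ‖∑ i ∈ range k, a ^ i‖ * ‖a - 1‖ ≤ 1 * ‖a - 1‖ :=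
        mul_le_mul_of_nonneg_right h1 (norm_nonneg _)
    _ = ‖a - 1‖ := one_mul _

private lemma aux_coprime (η : ℚ_[p]) (hη : ‖η‖ ≤ 1) (hlt : ‖η - 1‖ < 1)
    {m : ℕ} (hm : ¬ p ∣ m) : ‖η ^ m - 1‖ = ‖η - 1‖ := by
  rw [← geom_sum_mul, norm_mul]
  have hmnorm : ‖((m : ℤ) : ℚ_[p])‖ = 1 := by
    refine le_antisymm (Padic.norm_int_le_one _) ?_
    by_contra h
    push_neg at h
    rw [Padic.norm_intCast_lt_one_iff] at h
    exact hm (by exact_mod_cast h)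
  have key : (∑ i ∈ range m, η ^ i) = (∑ i ∈ range m, (η ^ i - 1)) + ((m : ℤ) : ℚ_[p]) := by
    rw [Finset.sum_sub_distrib]
    simp [Finset.card_range]
  have hsmall : ‖∑ i ∈ range m, (η ^ i - 1)‖ < 1 := by
    refine lt_of_le_of_lt ?_ hlt
    exact IsUltrametricDist.norm_sum_le_of_forall_le_of_nonneg (norm_nonneg _)
      (fun i _ => aux_pow_sub_one_le η hη i)
  have hS : ‖∑ i ∈ range m, η ^ i‖ = 1 := by
    rw [key, Padic.add_eq_max_of_ne (by rw [hmnorm]; exact ne_of_lt hsmall),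
      hmnorm, max_eq_right (le_of_lt hsmall)]
  rw [hS, one_mul]

private lemma aux_pow_p (η : ℚ_[p]) (h1 : ‖η - 1‖ < 1)
    (h2 : ‖η - 1‖ ^ (p - 1) < (p : ℝ)⁻¹) :
    ‖η ^ p - 1‖ = ‖η - 1‖ * (p : ℝ)⁻¹ := by
  have hp2 : 2 ≤ p := hp.out.two_le
  set x := η - 1 with hxdef
  have hη : η = x + 1 := by rw [hxdef]; ring
  have hxle : ‖x‖ ≤ 1 := h1.le
  have hbin : η ^ p = ∑ k ∈ range (p + 1), x ^ k * (p.choose k : ℚ_[p]) := by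
    rw [hη, add_pow]
    exact Finset.sum_congr rfl fun k _ => by rw [one_pow, mul_one]
  have expand : η ^ p - 1 = x * ∑ i ∈ range p, (p.choose (i + 1) : ℚ_[p]) * x ^ i := by
    rw [hbin, Finset.sum_range_succ', Finset.mul_sum]
    simp only [pow_zero, Nat.choose_zero_right, Nat.cast_one, one_mul, mul_one]
    rw [add_sub_cancel_right]
    exact Finset.sum_congr rfl fun i _ => by ring
  have hsplit : (∑ i ∈ range p, (p.choose (i + 1) : ℚ_[p]) * x ^ i)
      = (p : ℚ_[p]) + ∑ i ∈ Ico 1 p, (p.choose (i + 1) : ℚ_[p]) * x ^ i := by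
    rw [range_eq_Ico, Finset.sum_eq_sum_Ico_succ_bot (by omega)]
    simp
  set c : ℝ := max (‖x‖ * (p : ℝ)⁻¹) (‖x‖ ^ (p - 1)) with hcdef
  have hcnonneg : 0 ≤ c := le_max_of_le_right (by positivity)
  have hppos : (0 : ℝ) < (p : ℝ)⁻¹ := by
    have : (0:ℝ) < p := by exact_mod_cast hp.out.pos
    positivity
  have hclt : c < (p : ℝ)⁻¹ := by
    apply max_lt _ h2
    calc ‖x‖ * (p : ℝ)⁻¹ < 1 * (p : ℝ)⁻¹ := mul_lt_mul_of_pos_right h1 hppos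
      _ = (p : ℝ)⁻¹ := one_mul _
  have hT : ‖∑ i ∈ Ico 1 p, (p.choose (i + 1) : ℚ_[p]) * x ^ i‖ ≤ c := by
    refine IsUltrametricDist.norm_sum_le_of_forall_le_of_nonneg hcnonneg ?_
    intro i hi
    rw [Finset.mem_Ico] at hi
    rw [norm_mul, norm_pow]
    by_cases hip : i + 1 = p
    · have : p.choose (i + 1) = 1 := by rw [hip, Nat.choose_self]
      rw [this, Nat.cast_one, norm_one, one_mul]
      refine le_max_of_le_right ?_
      exact pow_le_pow_of_le_one (norm_nonneg _) hxle (by omega)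
    · have hdvd : p ∣ p.choose (i + 1) :=
        hp.out.dvd_choose_self (by omega) (by omega)
      obtain ⟨t, ht⟩ := hdvd
      have hnc : ‖(p.choose (i + 1) : ℚ_[p])‖ ≤ (p : ℝ)⁻¹ := by
        rw [ht]
        push_cast
        rw [norm_mul, Padic.norm_p]
        calc (p : ℝ)⁻¹ * ‖(t : ℚ_[p])‖ ≤ (p : ℝ)⁻¹ * 1 := by
              refine mul_le_mul_of_nonneg_left ?_ hppos.le
              exact_mod_cast Padic.norm_int_le_one (t : ℤ)
          _ = (p : ℝ)⁻¹ := mul_one _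
      refine le_max_of_le_left ?_
      calc ‖(p.choose (i + 1) : ℚ_[p])‖ * ‖x‖ ^ i ≤ (p : ℝ)⁻¹ * ‖x‖ ^ i :=
            mul_le_mul_of_nonneg_right hnc (by positivity)
        _ ≤ (p : ℝ)⁻¹ * ‖x‖ := by
            refine mul_le_mul_of_nonneg_left ?_ hppos.le
            calc ‖x‖ ^ i ≤ ‖x‖ ^ 1 := pow_le_pow_of_le_one (norm_nonneg _) hxle (by omega)
              _ = ‖x‖ := pow_one _
        _ = ‖x‖ * (p : ℝ)⁻¹ := mul_comm _ _
  have hS : ‖∑ i ∈ range p, (p.choose (i + 1) : ℚ_[p]) * x ^ i‖ = (p : ℝ)⁻¹ := by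
    rw [hsplit, Padic.add_eq_max_of_ne
        (by rw [Padic.norm_p]; exact ne_of_gt (lt_of_le_of_lt hT hclt)),
      Padic.norm_p, max_eq_left (le_trans hT hclt.le)]
  rw [expand, norm_mul, hS]

private lemma aux_main (η : ℚ_[p]) (hη : ‖η‖ ≤ 1) (h1 : ‖η - 1‖ < 1)
    (h2 : ‖η - 1‖ ^ (p - 1) < (p : ℝ)⁻¹) :
    ∀ m : ℕ, 1 ≤ m → ‖η - 1‖ / m ≤ ‖η ^ m - 1‖ := by
  intro m
  induction m using Nat.strong_induction_on with
  | _ m ih =>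
    intro hm
    by_cases hdvd : p ∣ m
    · obtain ⟨k, rfl⟩ := hdvd
      have hk1 : 1 ≤ k := Nat.pos_of_ne_zero (by rintro rfl; simp at hm)
      have hklt : k < p * k := by
        have := hp.out.two_le
        calc k = 1 * k := (one_mul k).symm
          _ < p * k := (Nat.mul_lt_mul_right hk1).mpr (by omega)
      have hIH := ih k hklt hk1
      have e1 : ‖η ^ k - 1‖ < 1 := lt_of_le_of_lt (aux_pow_sub_one_le η hη k) h1
      have e2 : ‖η ^ k - 1‖ ^ (p - 1) < (p : ℝ)⁻¹ :=
        lt_of_le_of_lt (pow_le_pow_left₀ (norm_nonneg _) (aux_pow_sub_one_le η hη k) _) h2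
      have hkey := aux_pow_p (η ^ k) e1 e2
      have hrw : η ^ (p * k) = (η ^ k) ^ p := by rw [← pow_mul, mul_comm]
      rw [hrw, hkey]
      have hppos : (0 : ℝ) < (p : ℝ)⁻¹ := by
        have : (0:ℝ) < p := by exact_mod_cast hp.out.pos
        positivity
      have hcast : ((p * k : ℕ) : ℝ) = (p : ℝ) * (k : ℝ) := by push_cast; ring
      rw [hcast]
      calc ‖η - 1‖ / ((p:ℝ) * k) = (‖η - 1‖ / k) * (p : ℝ)⁻¹ := by
            rw [mul_comm, div_mul_eq_div_div, div_eq_mul_inv]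
        _ ≤ ‖η ^ k - 1‖ * (p : ℝ)⁻¹ := mul_le_mul_of_nonneg_right hIH hppos.le
    · rw [aux_coprime η hη h1 hdvd]
      exact div_le_self (norm_nonneg _) (by exact_mod_cast hm)

end PadicAux

/-- Let `p` be a prime and `ξ ∈ ℚ_p` with `|ξ|_p = 1` which is not a root
of unity. Then there is a constant `C > 0`, independent of `n`, such that for every `n ≥ 1`,
`1/n ≤ C * |ξ^n − 1|_p`. -/
theorem padic_one_div_le_const_mul_norm_pow_sub_one
    (p : ℕ) [Fact p.Prime] (ξ : ℚ_[p])
    (hnorm : ‖ξ‖ = 1)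
    (hroot : ∀ m : ℕ, 1 ≤ m → ξ ^ m ≠ 1) :
    ∃ C : ℝ, 0 < C ∧ ∀ n : ℕ, 1 ≤ n → (1 : ℝ) / n ≤ C * ‖ξ ^ n - 1‖ := by
  classical
  have hpp : p.Prime := Fact.out
  have hξpow : ∀ k : ℕ, ‖ξ ^ k‖ ≤ 1 := fun k => by rw [norm_pow, hnorm, one_pow]
  have hone_div : ∀ n : ℕ, 1 ≤ n → (1:ℝ)/n ≤ 1 := by
    intro n hn
    rw [div_le_one (by exact_mod_cast Nat.lt_of_lt_of_le Nat.zero_lt_one hn)]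
    exact_mod_cast hn
  by_cases hex : ∃ k, 1 ≤ k ∧ ‖ξ ^ k - 1‖ < 1
  case neg =>
    push_neg at hex
    refine ⟨1, one_pos, fun n hn => ?_⟩
    calc (1:ℝ)/n ≤ 1 := hone_div n hn
      _ ≤ 1 * ‖ξ ^ n - 1‖ := by rw [one_mul]; exact hex n hn
  case pos =>
    obtain ⟨d, ⟨hd1, hdlt⟩, hmin⟩ :
        ∃ d, (1 ≤ d ∧ ‖ξ ^ d - 1‖ < 1) ∧ ∀ r, r < d → ¬(1 ≤ r ∧ ‖ξ ^ r - 1‖ < 1) :=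
      ⟨Nat.find hex, Nat.find_spec hex, fun r hr => Nat.find_min hex hr⟩
    have hstep : ∀ n : ℕ, ‖ξ ^ n - 1‖ < 1 → d ∣ n := by
      intro n h
      rcases Nat.eq_zero_or_pos (n % d) with h0 | hpos
      · exact Nat.dvd_of_mod_eq_zero h0
      · exfalso
        have hrd : n % d < d := Nat.mod_lt _ (by omega)
        refine hmin (n % d) hrd ⟨hpos, ?_⟩
        have hη : ξ ^ n = ξ ^ (n % d) * (ξ ^ d) ^ (n / d) := by
          rw [← pow_mul, ← pow_add, Nat.mod_add_div]
        have hne : ξ ^ (n % d) - 1 = ξ ^ (n % d) * (1 - (ξ ^ d) ^ (n / d)) + (ξ ^ n - 1) := by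
          rw [hη]; ring
        rw [hne]
        refine lt_of_le_of_lt (Padic.nonarchimedean _ _) (max_lt ?_ h)
        rw [norm_mul, norm_pow, hnorm, one_pow, one_mul]
        have hflip : (1 : ℚ_[p]) - (ξ ^ d) ^ (n / d) = -((ξ ^ d) ^ (n / d) - 1) := by ring
        rw [hflip, norm_neg]
        exact lt_of_le_of_lt (aux_pow_sub_one_le (ξ ^ d) (hξpow d) _) hdlt
    set δ := ‖ξ ^ d - 1‖ with hδ
    have hδpos : 0 < δ := norm_pos_iff.mpr (sub_ne_zero.mpr (hroot d hd1))
    have hδle : δ ≤ (p : ℝ)⁻¹ := by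
      have h := (Padic.norm_lt_pow_iff_norm_le_pow_sub_one (ξ ^ d - 1) 0).mp (by simpa using hdlt)
      simpa using h
    set η := ξ ^ (d * p) with hηdef
    have hηeq : η = (ξ ^ d) ^ p := by rw [hηdef, pow_mul]
    set ε := ‖η - 1‖ with hε
    have hdp1 : 1 ≤ d * p := Nat.mul_pos hd1 hpp.pos
    have hεpos : 0 < ε := norm_pos_iff.mpr (sub_ne_zero.mpr (hroot (d * p) hdp1))
    have hεle : ε ≤ δ := by
      rw [hε, hηeq, hδ]; exact aux_pow_sub_one_le (ξ ^ d) (hξpow d) p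
    have hε1 : ε < 1 := lt_of_le_of_lt hεle hdlt
    have hppos : (0:ℝ) < p := by exact_mod_cast hpp.pos
    have hp1 : (1:ℝ) < p := by exact_mod_cast hpp.one_lt
    have hpinvpos : (0:ℝ) < (p:ℝ)⁻¹ := by positivity
    have hpinvlt : (p:ℝ)⁻¹ < 1 := inv_lt_one_of_one_lt₀ hp1
    have hε2 : ε ^ (p - 1) < (p : ℝ)⁻¹ := by
      rcases eq_or_ne p 2 with hp2 | hp2
      · subst hp2
        rw [show (2:ℕ) - 1 = 1 from rfl, pow_one]
        have hfac : (ξ ^ d) ^ 2 - 1 = (ξ ^ d - 1) * (ξ ^ d + 1) := by ring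
        have h2norm : ‖(2 : ℚ_[2])‖ = (2:ℝ)⁻¹ := by
          have h := Padic.norm_p (p := 2)
          norm_num at h ⊢
          exact_mod_cast h
        have hδle' : δ ≤ (2:ℝ)⁻¹ := by exact_mod_cast hδle
        have hplus : ‖ξ ^ d + 1‖ ≤ (2:ℝ)⁻¹ := by
          have hsum : ξ ^ d + 1 = (ξ ^ d - 1) + 2 := by ring
          rw [hsum]
          refine le_trans (Padic.nonarchimedean _ _) (max_le hδle' ?_)
          rw [h2norm]
        calc ε = δ * ‖ξ ^ d + 1‖ := by rw [hε, hηeq, hfac, norm_mul, hδ]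
          _ ≤ (2:ℝ)⁻¹ * (2:ℝ)⁻¹ :=
            mul_le_mul hδle' hplus (norm_nonneg _) (by norm_num)
          _ < (2:ℝ)⁻¹ := by norm_num
      · have hp3 : 3 ≤ p := by have := hpp.two_le; omega
        calc ε ^ (p - 1) ≤ ((p:ℝ)⁻¹) ^ (p - 1) :=
              pow_le_pow_left₀ (norm_nonneg _) (hεle.trans hδle) _
          _ ≤ ((p:ℝ)⁻¹) ^ 2 := pow_le_pow_of_le_one hpinvpos.le hpinvlt.le (by omega)
          _ < (p:ℝ)⁻¹ := by
              rw [sq]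
              calc (p:ℝ)⁻¹ * (p:ℝ)⁻¹ < 1 * (p:ℝ)⁻¹ := mul_lt_mul_of_pos_right hpinvlt hpinvpos
                _ = (p:ℝ)⁻¹ := one_mul _
    have hminpos : 0 < min δ ε := lt_min hδpos hεpos
    refine ⟨(min δ ε)⁻¹ + 1, by positivity, fun n hn => ?_⟩
    have hC1 : (1:ℝ) ≤ (min δ ε)⁻¹ + 1 := le_add_of_nonneg_left (by positivity)
    by_cases hdn : d ∣ n
    · obtain ⟨m, rfl⟩ := hdn
      by_cases hpm : p ∣ m
      · obtain ⟨j, rfl⟩ := hpm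
        have hj1 : 1 ≤ j := Nat.pos_of_ne_zero (by rintro rfl; simp at hn)
        have hrw : ξ ^ (d * (p * j)) = η ^ j := by
          rw [hηdef, ← pow_mul, mul_assoc]
        rw [hrw]
        have hmain := aux_main η (hξpow _) hε1 hε2 j hj1
        have hjn : (j:ℝ) ≤ ((d * (p * j) : ℕ) : ℝ) := by
          have h1 : j ≤ p * j := Nat.le_mul_of_pos_left j hpp.pos
          have h2 : p * j ≤ d * (p * j) := Nat.le_mul_of_pos_left _ hd1
          exact_mod_cast le_trans h1 h2
        have hjpos : (0:ℝ) < j := by exact_mod_cast hj1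
        calc (1:ℝ) / ((d * (p * j) : ℕ) : ℝ) ≤ 1 / j :=
              one_div_le_one_div_of_le hjpos hjn
          _ = ε⁻¹ * (ε / j) := by
              field_simp
          _ ≤ ((min δ ε)⁻¹ + 1) * (ε / j) := by
              refine mul_le_mul_of_nonneg_right ?_ (by positivity)
              calc ε⁻¹ ≤ (min δ ε)⁻¹ := by
                    exact inv_anti₀ hminpos (min_le_right _ _)
                _ ≤ (min δ ε)⁻¹ + 1 := le_add_of_nonneg_right zero_le_one
          _ ≤ ((min δ ε)⁻¹ + 1) * ‖η ^ j - 1‖ := by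
              refine mul_le_mul_of_nonneg_left hmain (by positivity)
      · have hrw : ξ ^ (d * m) = (ξ ^ d) ^ m := pow_mul ξ d m
        rw [hrw, aux_coprime (ξ ^ d) (hξpow d) hdlt hpm, ← hδ]
        calc (1:ℝ) / ((d * m : ℕ) : ℝ) ≤ 1 := hone_div _ hn
          _ = δ⁻¹ * δ := (inv_mul_cancel₀ hδpos.ne').symm
          _ ≤ ((min δ ε)⁻¹ + 1) * δ := by
              refine mul_le_mul_of_nonneg_right ?_ hδpos.le
              calc δ⁻¹ ≤ (min δ ε)⁻¹ := inv_anti₀ hminpos (min_le_left _ _)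
                _ ≤ (min δ ε)⁻¹ + 1 := le_add_of_nonneg_right zero_le_one
    · have hge : 1 ≤ ‖ξ ^ n - 1‖ := by
        by_contra h
        push_neg at h
        exact hdn (hstep n h)
      calc (1:ℝ)/n ≤ 1 := hone_div n hn
        _ = 1 * 1 := (one_mul 1).symm
        _ ≤ ((min δ ε)⁻¹ + 1) * ‖ξ ^ n - 1‖ :=
            mul_le_mul hC1 hge zero_le_one (by positivity)
end

section
/- Let X be a finite set and let σ_1, σ_2 : X → X be two commuting bijections. Let p be the number of orbits of σ_2^{−1}∘σ_1 on X and q = #X. Then for every z ∈ ℂ with z ≠ 0 and z^{#O} ≠ 1 for each orbit O of σ_2^{−1}∘σ_1, the synchronization zeta function S_{σ_1,σ_2}(z) = ∏_O (1 − z^{#O})^{−1} satisfies the functional equation S_{σ_1,σ_2}(1/z) = (−1)^p · z^q · S_{σ_1,σ_2}(z). -/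
open Classical in
/-- The orbits of a permutation `τ` of a finite set, as a finset of finsets: the orbit of
`x` is the set of `y` lying on the same cycle of `τ` as `x`. -/
noncomputable def permOrbits {X : Type*} [Fintype X] (τ : Equiv.Perm X) :
    Finset (Finset X) :=
  Finset.univ.image fun x => Finset.univ.filter fun y => τ.SameCycle x y

open Classical in
lemma permOrbits_sum_card {X : Type*} [Fintype X] (τ : Equiv.Perm X) :
    ∑ O ∈ permOrbits τ, O.card = Fintype.card X := by
  classical
  set f : X → Finset X := fun x => Finset.univ.filter fun y => τ.SameCycle x y with hf
  have key : ∀ x : X, (Finset.univ.filter fun y => f y = f x) = f x := by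
    intro x
    ext y
    simp only [Finset.mem_filter, Finset.mem_univ, true_and, hf]
    constructor
    · intro h
      have : y ∈ Finset.univ.filter fun w => τ.SameCycle y w := by
        simp [Equiv.Perm.SameCycle.refl]
      rw [h] at this
      simpa using this
    · intro h
      ext w
      simp only [Finset.mem_filter, Finset.mem_univ, true_and]
      constructor
      · intro hw; exact h.trans hw
      · intro hw; exact h.symm.trans hw
  have := Finset.card_eq_sum_card_image f (Finset.univ : Finset X)
  rw [Finset.card_univ] at this
  rw [this]
  simp only [permOrbits]
  apply Finset.sum_congr rfl
  intro O hO
  obtain ⟨x, _, rfl⟩ := Finset.mem_image.mp hO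
  rw [key x]

open Classical in
lemma permOrbits_card_pos {X : Type*} [Fintype X] (τ : Equiv.Perm X)
    {O : Finset X} (hO : O ∈ permOrbits τ) : 0 < O.card := by
  simp only [permOrbits] at hO
  obtain ⟨x, _, rfl⟩ := Finset.mem_image.mp hO
  refine Finset.card_pos.mpr ⟨x, ?_⟩
  simp [Equiv.Perm.SameCycle.refl]

/-- Let `X` be a finite set and `σ₁, σ₂ : X → X` two commuting bijections.
Let `p` be the number of orbits of `σ₂⁻¹∘σ₁` on `X` and `q = #X`. Then for every `z ∈ ℂ`
with `z ≠ 0` and `z^{#O} ≠ 1` for each orbit `O` of `σ₂⁻¹∘σ₁`, the synchronization zeta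
function `S(z) = ∏_O (1 − z^{#O})⁻¹` satisfies `S(1/z) = (−1)^p · z^q · S(z)`. -/
theorem synchronization_zeta_functional_equation
    {X : Type*} [Fintype X] (σ₁ σ₂ : Equiv.Perm X)
    (hcomm : σ₁ * σ₂ = σ₂ * σ₁)
    (z : ℂ) (hz : z ≠ 0)
    (hroot : ∀ O ∈ permOrbits (σ₂⁻¹ * σ₁), z ^ O.card ≠ 1) :
    ∏ O ∈ permOrbits (σ₂⁻¹ * σ₁), ((1 : ℂ) - (1 / z) ^ O.card)⁻¹ =
      (-1 : ℂ) ^ (permOrbits (σ₂⁻¹ * σ₁)).card * z ^ Fintype.card X *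
        ∏ O ∈ permOrbits (σ₂⁻¹ * σ₁), ((1 : ℂ) - z ^ O.card)⁻¹ := by
  classical
  set τ := σ₂⁻¹ * σ₁
  have hterm : ∀ O ∈ permOrbits τ,
      ((1 : ℂ) - (1 / z) ^ O.card)⁻¹ = (-1) * z ^ O.card * ((1 : ℂ) - z ^ O.card)⁻¹ := by
    intro O hO
    have hzn : z ^ O.card ≠ 0 := pow_ne_zero _ hz
    have h1 : (1 : ℂ) - z ^ O.card ≠ 0 := sub_ne_zero.mpr (fun h => hroot O hO h.symm)
    have : (1 : ℂ) - (1 / z) ^ O.card = -(1 - z ^ O.card) / z ^ O.card := by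
      field_simp
      rw [one_div_pow, sub_mul, one_div_mul_cancel hzn]
      ring
    rw [this, inv_div, div_neg, div_eq_mul_inv]
    ring
  rw [Finset.prod_congr rfl hterm, Finset.prod_mul_distrib, Finset.prod_mul_distrib,
    Finset.prod_const, Finset.prod_pow_eq_pow_sum, permOrbits_sum_card]
end

section
/- Let X be a finite set and σ_1, σ_2 : X → X two bijections, and let L ≥ 1 satisfy σ_1^L = id = σ_2^L. Then in ℤ⟦z⟧ one has the identity (1 − z^L) · Σ_{n≥1} #S(σ_1^n, σ_2^n) · z^{n−1} = Σ_{n=1}^{L} #S(σ_1^n, σ_2^n) · z^{n−1}. Equivalently, the logarithmic derivative of the synchronization zeta function equals the rational function ( Σ_{n=1}^{L} #S(σ_1^n, σ_2^n) z^{n−1} ) / (1 − z^L). -/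
open PowerSeries

theorem synch_aux {X : Type*} [Fintype X] (σ₁ σ₂ : Equiv.Perm X)
    (L : ℕ) (h₁ : σ₁ ^ L = 1) (h₂ : σ₂ ^ L = 1) (n : ℕ) :
    (Nat.card {x : X // (σ₁ ^ (n + L + 1)) x = (σ₂ ^ (n + L + 1)) x} : ℤ) =
    (Nat.card {x : X // (σ₁ ^ (n + 1)) x = (σ₂ ^ (n + 1)) x} : ℤ) := by
  have e1 : σ₁ ^ (n + L + 1) = σ₁ ^ (n + 1) := by
    rw [show n + L + 1 = (n + 1) + L by ring, pow_add, h₁, mul_one]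
  have e2 : σ₂ ^ (n + L + 1) = σ₂ ^ (n + 1) := by
    rw [show n + L + 1 = (n + 1) + L by ring, pow_add, h₂, mul_one]
  rw [e1, e2]

/-- Let `X` be a finite set, `σ₁, σ₂ : X → X` two bijections, and `L ≥ 1`
with `σ₁^L = id = σ₂^L`. Then in `ℤ⟦z⟧` one has
`(1 − z^L) · Σ_{n≥1} #S(σ₁ⁿ, σ₂ⁿ)·z^{n−1} = Σ_{n=1}^{L} #S(σ₁ⁿ, σ₂ⁿ)·z^{n−1}`; equivalently,
the logarithmic derivative of the synchronization zeta function equals the rational function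
`(Σ_{n=1}^{L} #S(σ₁ⁿ, σ₂ⁿ) z^{n−1}) / (1 − z^L)`. -/
theorem synchronization_log_derivative_rational
    {X : Type*} [Fintype X] (σ₁ σ₂ : Equiv.Perm X)
    (L : ℕ) (hL : 1 ≤ L) (h₁ : σ₁ ^ L = 1) (h₂ : σ₂ ^ L = 1) :
    ((1 : PowerSeries ℤ) - PowerSeries.X ^ L) *
        (PowerSeries.mk fun n =>
          (Nat.card {x : X // (σ₁ ^ (n + 1)) x = (σ₂ ^ (n + 1)) x} : ℤ)) =
      ∑ n ∈ Finset.range L,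
        (PowerSeries.C (Nat.card {x : X // (σ₁ ^ (n + 1)) x = (σ₂ ^ (n + 1)) x} : ℤ)) *
          PowerSeries.X ^ n := by
  set f : ℕ → ℤ := fun n =>
    (Nat.card {x : X // (σ₁ ^ (n + 1)) x = (σ₂ ^ (n + 1)) x} : ℤ) with hf
  have hper : ∀ k, L ≤ k → f k = f (k - L) := by
    intro k hk
    have h := synch_aux σ₁ σ₂ L h₁ h₂ (k - L)
    rw [show k - L + L = k from by omega] at h
    exact h
  ext k
  rw [sub_mul, one_mul, map_sub]
  have hX : ((PowerSeries.X : PowerSeries ℤ) ^ L) * PowerSeries.mk f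
      = PowerSeries.mk f * PowerSeries.X ^ L := by ring
  rw [hX, PowerSeries.coeff_mul_X_pow', map_sum]
  simp only [PowerSeries.coeff_C_mul, PowerSeries.coeff_X_pow, mul_ite, mul_one, mul_zero,
    Finset.sum_ite_eq, Finset.mem_range, PowerSeries.coeff_mk]
  by_cases h : k < L
  · rw [if_pos h, if_neg (by omega), sub_zero]
  · rw [if_neg h, if_pos (by omega), hper k (by omega), sub_self]
end

section
/- Let X be a finite set and σ_1, σ_2 : X → X two bijections, let L ≥ 1 satisfy σ_1^L = id = σ_2^L, and let ω := exp(2πi/L) ∈ ℂ. Then for every integer k, the complex number Σ_{n=1}^{L} #S(σ_1^n, σ_2^n) · ω^{k·n} is real, i.e. its imaginary part is zero. -/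
open Complex

lemma sync_card_reflect {X : Type*} [Fintype X] (σ₁ σ₂ : Equiv.Perm X)
    (L n : ℕ) (h₁ : σ₁ ^ L = 1) (h₂ : σ₂ ^ L = 1) (hn : n ≤ L) :
    Nat.card {x : X // (σ₁ ^ n) x = (σ₂ ^ n) x}
      = Nat.card {x : X // (σ₁ ^ (L - n)) x = (σ₂ ^ (L - n)) x} := by
  apply Nat.card_congr
  refine Equiv.subtypeEquiv (σ₂ ^ n : Equiv.Perm X) ?_
  intro x
  have e₁ : ∀ y : X, (σ₁ ^ (L - n)) ((σ₁ ^ n) y) = y := by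
    intro y
    rw [← Equiv.Perm.mul_apply, ← pow_add, Nat.sub_add_cancel hn, h₁, Equiv.Perm.one_apply]
  have e₂ : ∀ y : X, (σ₂ ^ (L - n)) ((σ₂ ^ n) y) = y := by
    intro y
    rw [← Equiv.Perm.mul_apply, ← pow_add, Nat.sub_add_cancel hn, h₂, Equiv.Perm.one_apply]
  constructor
  · intro h
    show (σ₁ ^ (L - n)) ((σ₂ ^ n) x) = (σ₂ ^ (L - n)) ((σ₂ ^ n) x)
    rw [e₂ x, ← h, e₁ x]
  · intro h
    have h' : (σ₁ ^ (L - n)) ((σ₂ ^ n) x) = (σ₁ ^ (L - n)) ((σ₁ ^ n) x) := by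
      rw [e₁ x]
      calc (σ₁ ^ (L - n)) ((σ₂ ^ n) x) = (σ₂ ^ (L - n)) ((σ₂ ^ n) x) := h
        _ = x := e₂ x
    exact ((σ₁ ^ (L - n)).injective h').symm

/-- Let `X` be a finite set and `σ₁, σ₂ : X → X` two bijections, let
`L ≥ 1` satisfy `σ₁^L = id = σ₂^L`, and let `ω := exp(2πi/L) ∈ ℂ`. Then for every integer
`k`, the complex number `Σ_{n=1}^{L} #S(σ₁^n, σ₂^n) · ω^{k·n}` is real, i.e. its imaginary
part is zero. -/
theorem synchronization_sum_root_of_unity_real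
    {X : Type*} [Fintype X] (σ₁ σ₂ : Equiv.Perm X)
    (L : ℕ) (hL : 1 ≤ L) (h₁ : σ₁ ^ L = 1) (h₂ : σ₂ ^ L = 1)
    (ω : ℂ) (hω : ω = Complex.exp (2 * Real.pi * Complex.I / L)) :
    ∀ k : ℤ,
      (∑ n ∈ Finset.Icc 1 L,
        (Nat.card {x : X // (σ₁ ^ n) x = (σ₂ ^ n) x} : ℂ) * ω ^ (k * n)).im = 0 := by
  intro k
  have hLne : (L : ℂ) ≠ 0 := by exact Nat.cast_ne_zero.mpr (by omega)
  have hω0 : ω ≠ 0 := by rw [hω]; exact Complex.exp_ne_zero _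
  have hωL : ω ^ L = 1 := by
    rw [hω, ← Complex.exp_nat_mul, mul_div_cancel₀ _ hLne, Complex.exp_two_pi_mul_I]
  have hωkL : ω ^ (k * (L : ℤ)) = 1 := by
    rw [mul_comm, zpow_mul, zpow_natCast, hωL, one_zpow]
  have hconj : (starRingEnd ℂ) ω = ω⁻¹ := by
    rw [hω, ← Complex.exp_conj, ← Complex.exp_neg]
    congr 1
    have h2 : (2 * (Real.pi : ℂ) * I / (L : ℂ)) = ((2 * Real.pi / L : ℝ) : ℂ) * I := by
      push_cast; ring
    rw [h2, map_mul, Complex.conj_ofReal, Complex.conj_I]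
    ring
  set c : ℕ → ℂ := fun n => (Nat.card {x : X // (σ₁ ^ n) x = (σ₂ ^ n) x} : ℂ) with hc
  have hcreflect : ∀ n ≤ L, c (L - n) = c n := by
    intro n hn
    simp only [hc]
    exact_mod_cast congrArg (Nat.cast : ℕ → ℂ)
      (sync_card_reflect σ₁ σ₂ L n h₁ h₂ hn).symm
  set S : ℂ := ∑ n ∈ Finset.Icc 1 L, c n * ω ^ (k * n) with hS
  have key : (starRingEnd ℂ) S = S := by
    have hconjterm : ∀ n : ℕ, (starRingEnd ℂ) (c n * ω ^ (k * n))
        = c n * ω ^ (-(k * (n : ℤ))) := by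
      intro n
      rw [map_mul, map_zpow₀, hconj, inv_zpow, ← zpow_neg]
      congr 1
      simp [hc]
    rw [hS, map_sum]
    simp only [hconjterm]
    -- reindex: both sides equal the sum over range L of c m * ω^(k m)
    have hleft : ∑ n ∈ Finset.Icc 1 L, c n * ω ^ (-(k * (n : ℤ)))
        = ∑ m ∈ Finset.range L, c m * ω ^ (k * m) := by
      refine Finset.sum_nbij' (fun n => L - n) (fun m => L - m) ?_ ?_ ?_ ?_ ?_
      · intro n hn
        simp only [Finset.mem_Icc] at hn
        simp only [Finset.mem_range]
        omega
      · intro m hm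
        simp only [Finset.mem_range] at hm
        simp only [Finset.mem_Icc]
        omega
      · intro n hn
        simp only [Finset.mem_Icc] at hn
        omega
      · intro m hm
        simp only [Finset.mem_range] at hm
        omega
      · intro n hn
        simp only [Finset.mem_Icc] at hn
        rw [hcreflect n hn.2]
        congr 1
        have hcast : ((L - n : ℕ) : ℤ) = (L : ℤ) - n := by omega
        rw [hcast, mul_sub, zpow_sub₀ hω0, hωkL, zpow_neg, one_div]
    have hright : S = ∑ m ∈ Finset.range L, c m * ω ^ (k * m) := by
      have hIcc : Finset.Icc 1 L = insert L (Finset.Ico 1 L) :=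
        (Finset.Ico_insert_right hL).symm
      have hrange : Finset.range L = insert 0 (Finset.Ico 1 L) := by
        ext x
        simp only [Finset.mem_range, Finset.mem_insert, Finset.mem_Ico]
        omega
      have hc0L : c L * ω ^ (k * (L : ℤ)) = c 0 * ω ^ (k * (0 : ℕ)) := by
        rw [hωkL]
        have : c L = c 0 := by
          have := hcreflect L le_rfl
          simpa using this.symm
        simp [this]
      rw [hS, hIcc, hrange, Finset.sum_insert (by simp), Finset.sum_insert (by simp)]
      rw [hc0L]
    rw [hleft, ← hright]
  have := Complex.conj_eq_iff_im.mp key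
  exact this
end

section
/- Let φ, ψ be a synchronously tame pair of self-maps of a set X, and let S_{φ,ψ}(z) = exp(Σ_{k≥1} (#S(φ^k, ψ^k)/k) z^k) be its synchronization zeta function, viewed as a formal power series over ℂ. Then S_{φ,ψ}(z) is rational (i.e. there exist polynomials P, Q ∈ ℂ[z] with Q(0) ≠ 0 and Q·S_{φ,ψ} = P as formal power series) if and only if there exist r ∈ ℕ, integers χ_1, …, χ_r, and pairwise distinct nonzero λ_1, …, λ_r ∈ ℂ, each integral over ℤ (i.e. each an algebraic integer), such that for every k ≥ 1, #S(φ^k, ψ^k) = Σ_{i=1}^{r} χ_i · λ_i^k. -/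
open PowerSeries

/-- The formal exponential `exp g = Σ_{k≥0} g^k / k!` of a formal power series over `ℂ`
(intended for `g` with zero constant term). -/
noncomputable def psExpC (g : PowerSeries ℂ) : PowerSeries ℂ :=
  PowerSeries.mk fun n =>
    ∑ k ∈ Finset.range (n + 1), (PowerSeries.coeff n (g ^ k)) / (Nat.factorial k)

namespace SyncZeta


lemma coeff_pow_eq_zero {g : ℂ⟦X⟧} (hg : constantCoeff g = 0) {n k : ℕ} (h : n < k) :
    coeff n (g ^ k) = 0 := by
  obtain ⟨t, ht⟩ : (X : ℂ⟦X⟧) ∣ g := PowerSeries.X_dvd_iff.2 hg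
  have : g ^ k = X ^ k * t ^ k := by rw [ht, mul_pow]
  rw [this, PowerSeries.coeff_X_pow_mul' , if_neg (by omega)]

/-- partial sums of the exponential -/
noncomputable def En (g : ℂ⟦X⟧) (N : ℕ) : ℂ⟦X⟧ :=
  ∑ k ∈ Finset.range (N + 1), ((Nat.factorial k : ℂ))⁻¹ • g ^ k

lemma coeff_psExpC {g : ℂ⟦X⟧} (hg : constantCoeff g = 0) {n N : ℕ} (h : n ≤ N) :
    coeff n (psExpC g) = coeff n (En g N) := by
  have hEn : coeff n (En g N) = ∑ k ∈ Finset.range (N + 1), coeff n (g ^ k) / (Nat.factorial k) := by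
    rw [En, map_sum]
    apply Finset.sum_congr rfl
    intro k _
    rw [map_smul, smul_eq_mul, div_eq_inv_mul]
  rw [psExpC, coeff_mk, hEn]
  apply Finset.sum_subset (Finset.range_subset_range.2 (show n + 1 ≤ N + 1 by omega))
  intro k _ hk
  rw [Finset.mem_range, not_lt] at hk
  rw [coeff_pow_eq_zero hg (by omega), zero_div]

lemma constantCoeff_psExpC (g : ℂ⟦X⟧) : constantCoeff (psExpC g) = 1 := by
  rw [← PowerSeries.coeff_zero_eq_constantCoeff_apply, psExpC, coeff_mk]
  simp

lemma derivative_En (g : ℂ⟦X⟧) (N : ℕ) :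
    d⁄dX ℂ (En g (N + 1)) = d⁄dX ℂ g * En g N := by
  rw [En, map_sum]
  rw [Finset.sum_range_succ' (fun k => d⁄dX ℂ (((Nat.factorial k : ℂ))⁻¹ • g ^ k)) (N + 1)]
  have h0 : d⁄dX ℂ (((Nat.factorial 0 : ℂ))⁻¹ • g ^ 0) = 0 := by
    simp
  rw [h0, add_zero, En, Finset.mul_sum]
  apply Finset.sum_congr rfl
  intro k _
  rw [Derivation.map_smul, Derivation.leibniz_pow]
  have : ((Nat.factorial (k+1) : ℂ))⁻¹ • ((k+1) • g ^ (k + 1 - 1) • d⁄dX ℂ g) =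
      ((Nat.factorial k : ℂ))⁻¹ • (g ^ k • d⁄dX ℂ g) := by
    rw [Nat.add_sub_cancel]
    rw [← Nat.cast_smul_eq_nsmul ℂ (k+1), smul_smul]
    congr 1
    have hk1 : ((k : ℂ) + 1) ≠ 0 := Nat.cast_add_one_ne_zero k
    have hkf : ((Nat.factorial k : ℂ)) ≠ 0 := Nat.cast_ne_zero.2 (Nat.factorial_ne_zero k)
    rw [Nat.factorial_succ]
    push_cast
    field_simp
  rw [this, smul_eq_mul, mul_smul_comm]
  congr 1
  exact mul_comm _ _

lemma derivative_psExpC {g : ℂ⟦X⟧} (hg : constantCoeff g = 0) :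
    d⁄dX ℂ (psExpC g) = d⁄dX ℂ g * psExpC g := by
  ext n
  rw [PowerSeries.coeff_derivative, coeff_psExpC hg (le_refl (n+1)),
    ← PowerSeries.coeff_derivative, derivative_En]
  rw [PowerSeries.coeff_mul, PowerSeries.coeff_mul]
  apply Finset.sum_congr rfl
  intro p hp
  rw [Finset.HasAntidiagonal.mem_antidiagonal] at hp
  rw [coeff_psExpC hg (show p.2 ≤ n by omega)]

/-- uniqueness of solutions of F' = h F -/
lemma eq_of_derivative_eq (h F₁ F₂ : ℂ⟦X⟧) (h1 : d⁄dX ℂ F₁ = h * F₁)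
    (h2 : d⁄dX ℂ F₂ = h * F₂) (h0 : constantCoeff F₁ = constantCoeff F₂) :
    F₁ = F₂ := by
  ext n
  induction n using Nat.strong_induction_on with
  | _ n ih =>
    match n with
    | 0 => simpa [PowerSeries.coeff_zero_eq_constantCoeff] using h0
    | Nat.succ n =>
      have key : coeff (n+1) F₁ * ((n : ℂ)+1) = coeff (n+1) F₂ * ((n : ℂ)+1) := by
        rw [← PowerSeries.coeff_derivative, ← PowerSeries.coeff_derivative, h1, h2,
          PowerSeries.coeff_mul, PowerSeries.coeff_mul]
        apply Finset.sum_congr rfl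
        intro p hp
        rw [Finset.HasAntidiagonal.mem_antidiagonal] at hp
        rw [ih p.2 (by omega)]
      exact mul_right_cancel₀ (Nat.cast_add_one_ne_zero n) key



/-- the power series `-∑_{k≥1} l^k X^k`, which is `X·f'/f` for `f = 1 - l X`. -/
noncomputable def sers (l : ℂ) : ℂ⟦X⟧ :=
  PowerSeries.mk fun k => if k = 0 then 0 else -(l ^ k)

/-- `X f' = f s` : `s` is the log-derivative of `f` (times `X`). -/
def IsLogD (f s : ℂ⟦X⟧) : Prop := PowerSeries.X * d⁄dX ℂ f = f * s

lemma isLogD_one : IsLogD 1 0 := by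
  unfold IsLogD
  simp

lemma isLogD_mul {f g s t : ℂ⟦X⟧} (hf : IsLogD f s) (hg : IsLogD g t) :
    IsLogD (f * g) (s + t) := by
  unfold IsLogD at *
  rw [Derivation.leibniz, smul_eq_mul, smul_eq_mul]
  linear_combination f * hg + g * hf

lemma isLogD_pow {f s : ℂ⟦X⟧} (hf : IsLogD f s) (m : ℕ) :
    IsLogD (f ^ m) (m • s) := by
  induction m with
  | zero => simpa using isLogD_one
  | succ m ih =>
    have := isLogD_mul ih hf
    rw [← pow_succ] at this
    rw [succ_nsmul]
    exact this

lemma isLogD_C_mul {f s : ℂ⟦X⟧} (c : ℂ) (hf : IsLogD f s) :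
    IsLogD (PowerSeries.C c * f) s := by
  unfold IsLogD at *
  rw [Derivation.leibniz, smul_eq_mul, smul_eq_mul, PowerSeries.derivative_C, mul_zero, add_zero]
  linear_combination PowerSeries.C c * hf

lemma isLogD_lin (l : ℂ) :
    IsLogD (1 - PowerSeries.C l * PowerSeries.X) (sers l) := by
  unfold IsLogD
  have hD : d⁄dX ℂ (1 - PowerSeries.C l * PowerSeries.X) = - PowerSeries.C l := by
    rw [map_sub, Derivation.leibniz, PowerSeries.derivative_C, PowerSeries.derivative_X]
    simp
  rw [hD]
  ext k
  rw [sub_mul, one_mul]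
  match k with
  | 0 =>
    simp [sers, PowerSeries.coeff_zero_eq_constantCoeff]
  | 1 =>
    rw [map_sub]
    have h1 : coeff 1 (PowerSeries.X * -PowerSeries.C l) = -l := by
      rw [mul_comm]
      rw [show (1 : ℕ) = 0 + 1 from rfl, PowerSeries.coeff_succ_mul_X]
      simp
    have h2 : coeff 1 (PowerSeries.C l * PowerSeries.X * sers l) = 0 := by
      rw [mul_assoc, PowerSeries.coeff_C_mul, mul_comm PowerSeries.X, show (1:ℕ) = 0 + 1 from rfl,
        PowerSeries.coeff_succ_mul_X]
      simp [sers]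
    rw [h1, h2, sub_zero]
    simp [sers]
  | (k+2) =>
    rw [map_sub]
    have h1 : coeff (k+2) (PowerSeries.X * -PowerSeries.C l) = 0 := by
      rw [mul_comm, show k+2 = (k+1) + 1 from rfl, PowerSeries.coeff_succ_mul_X]
      simp
    have h2 : coeff (k+2) (PowerSeries.C l * PowerSeries.X * sers l) = -(l^(k+2)) := by
      rw [mul_assoc, PowerSeries.coeff_C_mul, mul_comm PowerSeries.X, show k+2 = (k+1) + 1 from rfl,
        PowerSeries.coeff_succ_mul_X]
      simp [sers, pow_succ]
      ring
    rw [h1, h2]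
    simp [sers]

lemma isLogD_X_sub_C {ρ : ℂ} (hρ : ρ ≠ 0) :
    IsLogD ((Polynomial.X - Polynomial.C ρ : Polynomial ℂ) : ℂ⟦X⟧) (sers ρ⁻¹) := by
  have key : ((Polynomial.X - Polynomial.C ρ : Polynomial ℂ) : ℂ⟦X⟧) =
      PowerSeries.C (-ρ) * (1 - PowerSeries.C ρ⁻¹ * PowerSeries.X) := by
    rw [Polynomial.coe_sub, Polynomial.coe_X, Polynomial.coe_C]
    rw [mul_sub, mul_one, ← mul_assoc, ← map_mul]
    rw [show -ρ * ρ⁻¹ = -1 by field_simp]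
    simp only [map_neg, map_one, neg_mul, one_mul, neg_neg]
    ring
  rw [key]
  exact isLogD_C_mul _ (isLogD_lin _)

lemma isLogD_multiset (m : Multiset ℂ) (hm : ∀ a ∈ m, a ≠ 0) :
    IsLogD (((m.map fun a => Polynomial.X - Polynomial.C a).prod : Polynomial ℂ) : ℂ⟦X⟧)
      ((m.map fun a => sers a⁻¹).sum) := by
  induction m using Multiset.induction_on with
  | empty => simpa using isLogD_one
  | cons a t ih =>
    rw [Multiset.map_cons, Multiset.prod_cons, Multiset.map_cons, Multiset.sum_cons,
      Polynomial.coe_mul]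
    exact isLogD_mul (isLogD_X_sub_C (hm a (Multiset.mem_cons_self a t)))
      (ih fun x hx => hm x (Multiset.mem_cons_of_mem hx))

lemma roots_ne_zero {R : Polynomial ℂ} (hR : R.coeff 0 ≠ 0) {a : ℂ} (ha : a ∈ R.roots) :
    a ≠ 0 := by
  intro h
  have hR0 : R ≠ 0 := fun hh => hR (by simp [hh])
  have := (Polynomial.mem_roots hR0).1 ha
  rw [h] at this
  exact hR (by simpa [Polynomial.IsRoot, Polynomial.coeff_zero_eq_eval_zero] using this)

lemma isLogD_poly (R : Polynomial ℂ) (hR : R.coeff 0 ≠ 0) :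
    IsLogD (R : ℂ⟦X⟧) ((R.roots.map fun a => sers a⁻¹).sum) := by
  have hfact := (IsAlgClosed.splits R).eq_prod_roots
  have : (R : ℂ⟦X⟧) = PowerSeries.C R.leadingCoeff *
      (((R.roots.map fun a => Polynomial.X - Polynomial.C a).prod : Polynomial ℂ) : ℂ⟦X⟧) := by
    conv_lhs => rw [hfact]
    rw [Polynomial.coe_mul, Polynomial.coe_C]
  rw [this]
  exact isLogD_C_mul _ (isLogD_multiset _ fun a ha => roots_ne_zero hR ha)



lemma isIntegral_of_powersums {r : ℕ} (χ : Fin r → ℤ) (lam : Fin r → ℂ)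
    (hinj : Function.Injective lam) (h0 : ∀ i', lam i' ≠ 0) (hχ : ∀ i', χ i' ≠ 0)
    (b : ℕ → ℤ) (hb : ∀ k, 1 ≤ k → ((b k : ℤ) : ℂ) = ∑ i', (χ i' : ℂ) * lam i' ^ k)
    (i : Fin r) : IsIntegral ℤ (lam i) := by
  classical
  set u : ℕ → (Fin r → ℂ) := fun j i' => (χ i' : ℂ) * lam i' ^ j with hu
  set v : ℕ → (Fin r → ℤ) := fun j k => b (k.val + 1 + j) with hv
  let cl : (Fin r → ℤ) →ₗ[ℤ] (Fin r → ℂ) :=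
    LinearMap.pi fun k => (Int.castAddHom ℂ).toIntLinearMap.comp (LinearMap.proj k)
  set V : Matrix (Fin r) (Fin r) ℂ := Matrix.of fun (k i' : Fin r) => lam i' ^ (k.val + 1) with hV
  have hVdet : IsUnit V.det := by
    have hVeq : V = (Matrix.vandermonde lam).transpose * Matrix.diagonal lam := by
      ext k i'
      rw [Matrix.mul_diagonal]
      simp [Matrix.vandermonde, hV, pow_succ]
    rw [hVeq, Matrix.det_mul, Matrix.det_transpose, Matrix.det_diagonal]
    exact isUnit_iff_ne_zero.2 (mul_ne_zero (Matrix.det_vandermonde_ne_zero_iff.2 hinj)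
      (Finset.prod_ne_zero_iff.2 fun j _ => h0 j))
  let Vlin : (Fin r → ℂ) →ₗ[ℤ] (Fin r → ℂ) := V.mulVecLin.restrictScalars ℤ
  have hVlin : ∀ x, Vlin x = V.mulVec x := fun x => rfl
  have hVinj : Function.Injective Vlin := by
    intro x y hxy
    have h1 : V⁻¹.mulVec (V.mulVec x) = V⁻¹.mulVec (V.mulVec y) := by
      rw [← hVlin, ← hVlin, hxy]
    rwa [Matrix.mulVec_mulVec, Matrix.mulVec_mulVec, Matrix.nonsing_inv_mul V hVdet,
      Matrix.one_mulVec, Matrix.one_mulVec] at h1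
  have hVu : ∀ j, Vlin (u j) = cl (v j) := by
    intro j
    funext k
    have hrhs : cl (v j) k = ((b (k.val + 1 + j) : ℤ) : ℂ) := rfl
    rw [hVlin, hrhs, hb _ (by omega)]
    show ∑ i', V k i' * u j i' = _
    apply Finset.sum_congr rfl
    intro i' _
    show lam i' ^ (k.val + 1) * ((χ i' : ℂ) * lam i' ^ j) = (χ i' : ℂ) * lam i' ^ (k.val + 1 + j)
    rw [pow_add]
    ring
  set N : Submodule ℤ (Fin r → ℂ) := Submodule.span ℤ (Set.range u) with hN
  have hNfg : N.FG := by
    apply Submodule.fg_of_fg_map_injective Vlin hVinj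
    have hmap : Submodule.map Vlin N = Submodule.map cl (Submodule.span ℤ (Set.range v)) := by
      rw [hN, Submodule.map_span, Submodule.map_span, ← Set.range_comp, ← Set.range_comp]
      congr 1
      exact congrArg Set.range (funext hVu)
    rw [hmap]
    exact (IsNoetherian.noetherian _).map cl
  obtain ⟨S, hS⟩ := hNfg
  set s := S.card with hs
  let w : Fin s → (Fin r → ℂ) := fun p => (S.equivFin.symm p : Fin r → ℂ)
  have hrangew : Set.range w = (S : Set (Fin r → ℂ)) := by
    ext y
    constructor
    · rintro ⟨p, rfl⟩
      exact (S.equivFin.symm p).2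
    · intro hy
      refine ⟨S.equivFin ⟨y, hy⟩, ?_⟩
      show ((S.equivFin.symm (S.equivFin ⟨y, hy⟩)) : Fin r → ℂ) = y
      rw [Equiv.symm_apply_apply]
  have hspanw : Submodule.span ℤ (Set.range w) = N := by rw [hrangew]; exact hS
  have hwN : ∀ p, w p ∈ N := fun p => by
    rw [← hspanw]; exact Submodule.subset_span ⟨p, rfl⟩
  set Dm : Matrix (Fin r) (Fin r) ℂ := Matrix.diagonal lam with hDm
  have hDu : ∀ j, Dm.mulVec (u j) = u (j + 1) := by
    intro j; funext k
    rw [hDm, Matrix.mulVec_diagonal]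
    show lam k * ((χ k : ℂ) * lam k ^ j) = (χ k : ℂ) * lam k ^ (j + 1)
    rw [pow_succ]; ring
  have hDN : ∀ x ∈ N, Dm.mulVec x ∈ N := by
    intro x hx
    have hle : Submodule.map (Dm.mulVecLin.restrictScalars ℤ) N ≤ N := by
      rw [hN, Submodule.map_span]
      apply Submodule.span_le.2
      rintro y ⟨_, ⟨j, rfl⟩, rfl⟩
      show Dm.mulVecLin (u j) ∈ Submodule.span ℤ (Set.range u)
      rw [Matrix.mulVecLin_apply, hDu]
      exact Submodule.subset_span ⟨j + 1, rfl⟩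
    exact hle ⟨x, hx, rfl⟩
  have hMex : ∀ p, ∃ c : Fin s → ℤ, ∑ q, c q • w q = Dm.mulVec (w p) := by
    intro p
    have hmem : Dm.mulVec (w p) ∈ N := hDN _ (hwN p)
    rw [← hspanw] at hmem
    exact (Submodule.mem_span_range_iff_exists_fun ℤ).1 hmem
  choose M hM using hMex
  set Mm : Matrix (Fin s) (Fin s) ℤ := Matrix.of M with hMm
  have hM' : ∀ p : Fin s, ∑ q, Mm p q • w q = Dm.mulVec (w p) := hM
  have hsum : ∀ (A : Matrix (Fin r) (Fin r) ℂ) (c : Fin s → ℤ) (x : Fin s → (Fin r → ℂ)),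
      A.mulVec (∑ q, c q • x q) = ∑ q, c q • A.mulVec (x q) := by
    intro A c x
    show (A.mulVecLin.restrictScalars ℤ) (∑ q, c q • x q) = _
    rw [map_sum]
    exact Finset.sum_congr rfl fun q _ => (A.mulVecLin.restrictScalars ℤ).map_smul (c q) (x q)
  have hMn : ∀ (n : ℕ) (p : Fin s), (Dm ^ n).mulVec (w p) = ∑ q, ((Mm ^ n) p q) • w q := by
    intro n
    induction n with
    | zero =>
      intro p
      rw [pow_zero, Matrix.one_mulVec, pow_zero]
      simp [Matrix.one_apply, ite_smul]
    | succ n ih =>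
      intro p
      rw [pow_succ', ← Matrix.mulVec_mulVec, ih p, hsum]
      calc ∑ q, (Mm ^ n) p q • Dm.mulVec (w q)
          = ∑ q, ∑ t, (Mm ^ n) p q • (Mm q t) • w t := by
            apply Finset.sum_congr rfl; intro q _
            rw [← hM' q, Finset.smul_sum]
        _ = ∑ t, (∑ q, (Mm ^ n) p q * Mm q t) • w t := by
            rw [Finset.sum_comm]
            apply Finset.sum_congr rfl; intro t _
            rw [Finset.sum_smul]
            apply Finset.sum_congr rfl; intro q _
            rw [smul_smul]
        _ = ∑ t, ((Mm ^ (n + 1)) p t) • w t := by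
            apply Finset.sum_congr rfl; intro t _
            rw [pow_succ, Matrix.mul_apply]
  have hfw : ∀ (f : Polynomial ℤ) (p : Fin s), (Polynomial.aeval Dm f).mulVec (w p)
      = ∑ q, ((Polynomial.aeval Mm f) p q) • w q := by
    intro f
    induction f using Polynomial.induction_on' with
    | add f g ihf ihg =>
      intro p
      rw [map_add, map_add, Matrix.add_mulVec]
      rw [ihf, ihg, ← Finset.sum_add_distrib]
      apply Finset.sum_congr rfl; intro q _
      rw [Matrix.add_apply, add_smul]
    | monomial n c =>
      intro p
      rw [Polynomial.aeval_monomial, Polynomial.aeval_monomial,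
        Algebra.algebraMap_eq_smul_one, Algebra.algebraMap_eq_smul_one,
        smul_mul_assoc, one_mul, smul_mul_assoc, one_mul,
        Matrix.smul_mulVec, hMn n p, Finset.smul_sum]
      apply Finset.sum_congr rfl; intro q _
      rw [Matrix.smul_apply, smul_smul]
      rw [smul_eq_mul]
  set f := Mm.charpoly with hf
  have hkill : ∀ x ∈ N, (Polynomial.aeval Dm f).mulVec x = 0 := by
    intro x hx
    have hker : N ≤ LinearMap.ker ((Polynomial.aeval Dm f).mulVecLin.restrictScalars ℤ) := by
      rw [← hspanw]
      apply Submodule.span_le.2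
      rintro y ⟨p, rfl⟩
      rw [SetLike.mem_coe, LinearMap.mem_ker]
      show (Polynomial.aeval Dm f).mulVec (w p) = 0
      rw [hfw, hf, Matrix.aeval_self_charpoly]
      simp
    exact LinearMap.mem_ker.1 (hker hx)
  have hDmn : ∀ n : ℕ, (Dm ^ n).mulVec (Pi.single i 1) = (lam i ^ n) • (Pi.single i 1 : Fin r → ℂ) := by
    intro n
    induction n with
    | zero => rw [pow_zero, Matrix.one_mulVec, pow_zero, one_smul]
    | succ n ih =>
      have hstep : Dm.mulVec (Pi.single i 1) = lam i • (Pi.single i 1 : Fin r → ℂ) := by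
        funext k
        rw [hDm, Matrix.mulVec_diagonal]
        rcases eq_or_ne k i with h | h
        · subst h; simp
        · simp [Pi.single_apply, h]
      rw [pow_succ', ← Matrix.mulVec_mulVec, ih, Matrix.mulVec_smul, hstep,
        smul_smul, ← pow_succ]
  have heig : ∀ fp : Polynomial ℤ, (Polynomial.aeval Dm fp).mulVec (Pi.single i 1)
      = (Polynomial.aeval (lam i) fp) • (Pi.single i 1 : Fin r → ℂ) := by
    intro fp
    induction fp using Polynomial.induction_on' with
    | add p q ihp ihq => rw [map_add, map_add, Matrix.add_mulVec, ihp, ihq, add_smul]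
    | monomial n c =>
      rw [Polynomial.aeval_monomial, Polynomial.aeval_monomial,
        Algebra.algebraMap_eq_smul_one, smul_mul_assoc, one_mul,
        Matrix.smul_mulVec, hDmn, ← Int.cast_smul_eq_zsmul ℂ, smul_smul]
      norm_num
  set U : Matrix (Fin r) (Fin r) ℂ :=
    Matrix.of (fun (i' j : Fin r) => (χ i' : ℂ) * lam i' ^ (j : ℕ)) with hU
  have hUdet : IsUnit U.det := by
    have hUeq : U = Matrix.diagonal (fun i' => (χ i' : ℂ)) * Matrix.vandermonde lam := by
      ext i' j
      rw [Matrix.diagonal_mul]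
      simp [Matrix.vandermonde, hU]
    rw [hUeq, Matrix.det_mul, Matrix.det_diagonal]
    refine isUnit_iff_ne_zero.2 (mul_ne_zero (Finset.prod_ne_zero_iff.2 fun j _ => ?_)
      (Matrix.det_vandermonde_ne_zero_iff.2 hinj))
    exact_mod_cast hχ j
  set c := U⁻¹.mulVec (Pi.single i 1) with hc
  have hUc : ∑ j : Fin r, c j • u (j : ℕ) = Pi.single i 1 := by
    have h1 : U.mulVec c = Pi.single i 1 := by
      rw [hc, Matrix.mulVec_mulVec, Matrix.mul_nonsing_inv U hUdet, Matrix.one_mulVec]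
    funext k
    have h2 : (∑ j : Fin r, c j • u (j : ℕ)) k = U.mulVec c k := by
      show _ = ∑ j, U k j * c j
      rw [Finset.sum_apply]
      apply Finset.sum_congr rfl; intro j _
      show c j * ((χ k : ℂ) * lam k ^ (j : ℕ)) = U k j * c j
      show c j * ((χ k : ℂ) * lam k ^ (j : ℕ)) = ((χ k : ℂ) * lam k ^ (j : ℕ)) * c j
      ring
    rw [h2, h1]
  have huN : ∀ j : ℕ, u j ∈ N := fun j => Submodule.subset_span ⟨j, rfl⟩
  have hone : (Polynomial.aeval Dm f).mulVec (Pi.single i 1) = 0 := by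
    rw [← hUc]
    have hsumC : (Polynomial.aeval Dm f).mulVec (∑ j : Fin r, c j • u (j : ℕ))
        = ∑ j : Fin r, c j • (Polynomial.aeval Dm f).mulVec (u (j : ℕ)) := by
      show (Polynomial.aeval Dm f).mulVecLin _ = _
      rw [map_sum]
      exact Finset.sum_congr rfl fun j _ =>
        (Polynomial.aeval Dm f).mulVecLin.map_smul (c j) (u (j : ℕ))
    rw [hsumC]
    apply Finset.sum_eq_zero
    intro j _
    rw [hkill _ (huN (j : ℕ)), smul_zero]
  have hzero : Polynomial.aeval (lam i) f = 0 := by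
    have h2 : (Polynomial.aeval (lam i) f) • (Pi.single i 1 : Fin r → ℂ) = 0 := by
      rw [← heig f, hone]
    have h3 := congrFun h2 i
    simpa using h3
  exact ⟨f, Matrix.charpoly_monic Mm, by rw [← Polynomial.aeval_def]; exact hzero⟩

lemma isLogD_finprod {ι : Type*} (t : Finset ι) (f sf : ι → ℂ⟦X⟧)
    (h : ∀ i ∈ t, IsLogD (f i) (sf i)) :
    IsLogD (∏ i ∈ t, f i) (∑ i ∈ t, sf i) := by
  classical
  induction t using Finset.induction_on with
  | empty => simpa using isLogD_one
  | insert x t' hx ih =>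
    rw [Finset.prod_insert hx, Finset.sum_insert hx]
    exact isLogD_mul (h x (Finset.mem_insert_self x t'))
      (ih fun i hi => h i (Finset.mem_insert_of_mem hi))

section AbstractA

variable (a : ℕ → ℕ)

/-- the series `g = Σ_{n≥1} (a n / n) zⁿ` -/
noncomputable def gser : ℂ⟦X⟧ :=
  PowerSeries.mk fun n => if n = 0 then 0 else (a n : ℂ) / n

lemma gser_const : constantCoeff (gser a) = 0 := by
  rw [← PowerSeries.coeff_zero_eq_constantCoeff_apply, gser, coeff_mk, if_pos rfl]

lemma coeff_D_gser (n : ℕ) : coeff n (d⁄dX ℂ (gser a)) = (a (n + 1) : ℂ) := by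
  rw [PowerSeries.coeff_derivative, gser, coeff_mk, if_neg (Nat.succ_ne_zero n)]
  push_cast
  rw [div_mul_cancel₀ _ (Nat.cast_add_one_ne_zero n)]

lemma forward_dir (P Q : Polynomial ℂ) (hQ0 : Q.coeff 0 ≠ 0)
    (hPQ : (Q : ℂ⟦X⟧) * psExpC (gser a) = (P : ℂ⟦X⟧)) :
    ∃ (r : ℕ) (χ : Fin r → ℤ) (lam : Fin r → ℂ),
      Function.Injective lam ∧ (∀ i, lam i ≠ 0) ∧ (∀ i, IsIntegral ℤ (lam i)) ∧
      ∀ k : ℕ, 1 ≤ k → (a k : ℂ) = ∑ i, (χ i : ℂ) * lam i ^ k := by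
  classical
  set g := gser a with hg
  have hg0 := gser_const a
  set F := psExpC g with hF
  have hF0 : constantCoeff F = 1 := constantCoeff_psExpC g
  have hP0 : P.coeff 0 ≠ 0 := by
    have hcc := congrArg (constantCoeff) hPQ
    rw [map_mul, hF0, mul_one, Polynomial.constantCoeff_coe, Polynomial.constantCoeff_coe] at hcc
    rw [← hcc]; exact hQ0
  have hder := congrArg (d⁄dX ℂ) hPQ
  rw [Derivation.leibniz, smul_eq_mul, smul_eq_mul, derivative_psExpC hg0] at hder
  -- hder : ↑Q * (D g * F) + F * D ↑Q = D ↑P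
  have key : d⁄dX ℂ g * ((P : ℂ⟦X⟧) * (Q : ℂ⟦X⟧)) =
      d⁄dX ℂ (P : ℂ⟦X⟧) * (Q : ℂ⟦X⟧) - d⁄dX ℂ (Q : ℂ⟦X⟧) * (P : ℂ⟦X⟧) := by
    linear_combination (Q : ℂ⟦X⟧) * hder -
      (d⁄dX ℂ g * (Q : ℂ⟦X⟧) + d⁄dX ℂ (Q : ℂ⟦X⟧)) * hPQ
  set sP := ((P.roots.map fun ρ => sers ρ⁻¹).sum) with hsP
  set sQ := ((Q.roots.map fun ρ => sers ρ⁻¹).sum) with hsQ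
  have hLP : IsLogD (P : ℂ⟦X⟧) sP := isLogD_poly P hP0
  have hLQ : IsLogD (Q : ℂ⟦X⟧) sQ := isLogD_poly Q hQ0
  rw [IsLogD] at hLP hLQ
  have main : PowerSeries.X * d⁄dX ℂ g * ((P : ℂ⟦X⟧) * (Q : ℂ⟦X⟧)) =
      (sP - sQ) * ((P : ℂ⟦X⟧) * (Q : ℂ⟦X⟧)) := by
    calc PowerSeries.X * d⁄dX ℂ g * ((P : ℂ⟦X⟧) * (Q : ℂ⟦X⟧))
        = PowerSeries.X * (d⁄dX ℂ g * ((P : ℂ⟦X⟧) * (Q : ℂ⟦X⟧))) := by ring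
      _ = (PowerSeries.X * d⁄dX ℂ (P : ℂ⟦X⟧)) * (Q : ℂ⟦X⟧)
            - (PowerSeries.X * d⁄dX ℂ (Q : ℂ⟦X⟧)) * (P : ℂ⟦X⟧) := by rw [key]; ring
      _ = ((P : ℂ⟦X⟧) * sP) * (Q : ℂ⟦X⟧) - ((Q : ℂ⟦X⟧) * sQ) * (P : ℂ⟦X⟧) := by
            rw [hLP, hLQ]
      _ = (sP - sQ) * ((P : ℂ⟦X⟧) * (Q : ℂ⟦X⟧)) := by ring
  have hPne : (P : ℂ⟦X⟧) ≠ 0 := fun h =>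
    hP0 (by rw [← Polynomial.constantCoeff_coe, h, map_zero])
  have hQne : (Q : ℂ⟦X⟧) ≠ 0 := fun h =>
    hQ0 (by rw [← Polynomial.constantCoeff_coe, h, map_zero])
  have hXDg : PowerSeries.X * d⁄dX ℂ g = sP - sQ :=
    mul_right_cancel₀ (mul_ne_zero hPne hQne) main
  -- coefficient extraction
  have hcoeff : ∀ k : ℕ, 1 ≤ k →
      (a k : ℂ) = (Q.roots.map fun ρ => (ρ⁻¹ : ℂ) ^ k).sum
        - (P.roots.map fun ρ => (ρ⁻¹ : ℂ) ^ k).sum := by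
    intro k hk
    obtain ⟨m, rfl⟩ : ∃ m, k = m + 1 := ⟨k - 1, by omega⟩
    have h1 : coeff (m + 1) (PowerSeries.X * d⁄dX ℂ g) = (a (m + 1) : ℂ) := by
      rw [PowerSeries.coeff_succ_X_mul, coeff_D_gser]
    have hms : ∀ (mm : Multiset ℂ),
        coeff (m + 1) ((mm.map fun ρ => sers ρ⁻¹).sum)
          = -((mm.map fun ρ => (ρ⁻¹ : ℂ) ^ (m + 1)).sum) := by
      intro mm
      induction mm using Multiset.induction_on with
      | empty => simp
      | cons x t ih =>
        rw [Multiset.map_cons, Multiset.map_cons, Multiset.sum_cons, Multiset.sum_cons,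
          map_add, ih]
        rw [show coeff (m+1) (sers x⁻¹) = -(x⁻¹ ^ (m+1)) by
          rw [sers, coeff_mk, if_neg (Nat.succ_ne_zero m)]]
        ring
    have h2 := congrArg (coeff (m + 1)) hXDg
    rw [h1, map_sub, hsP, hsQ, hms, hms] at h2
    rw [h2]; ring
  set T : Finset ℂ := P.roots.toFinset ∪ Q.roots.toFinset with hT
  set χm : ℂ → ℤ := fun ρ => (Q.roots.count ρ : ℤ) - (P.roots.count ρ : ℤ) with hχm
  have hTz : ∀ ρ ∈ T, ρ ≠ 0 := by
    intro ρ hρ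
    rw [hT, Finset.mem_union, Multiset.mem_toFinset, Multiset.mem_toFinset] at hρ
    rcases hρ with h | h
    · exact roots_ne_zero hP0 h
    · exact roots_ne_zero hQ0 h
  have hfinsum : ∀ (R : Polynomial ℂ), R.roots.toFinset ⊆ T → ∀ k : ℕ,
      (R.roots.map fun ρ => (ρ⁻¹ : ℂ) ^ k).sum
        = ∑ ρ ∈ T, (R.roots.count ρ : ℂ) * (ρ⁻¹ : ℂ) ^ k := by
    intro R hsub k
    rw [Finset.sum_multiset_map_count]
    rw [Finset.sum_subset hsub]
    · apply Finset.sum_congr rfl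
      intro ρ _
      rw [nsmul_eq_mul]
    · intro x _ hx
      rw [Multiset.mem_toFinset] at hx
      rw [Multiset.count_eq_zero_of_notMem hx, zero_smul]
  have hak : ∀ k : ℕ, 1 ≤ k → (a k : ℂ) = ∑ ρ ∈ T, (χm ρ : ℂ) * (ρ⁻¹ : ℂ) ^ k := by
    intro k hk
    rw [hcoeff k hk, hfinsum Q (Finset.subset_union_right) k,
      hfinsum P (Finset.subset_union_left) k, ← Finset.sum_sub_distrib]
    apply Finset.sum_congr rfl
    intro ρ _
    rw [hχm]
    push_cast
    ring
  set T' : Finset ℂ := T.filter (fun ρ => χm ρ ≠ 0) with hT'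
  have hak' : ∀ k : ℕ, 1 ≤ k → (a k : ℂ) = ∑ ρ ∈ T', (χm ρ : ℂ) * (ρ⁻¹ : ℂ) ^ k := by
    intro k hk
    rw [hak k hk]
    symm
    apply Finset.sum_subset (Finset.filter_subset _ _)
    intro x hx hxn
    rw [Finset.mem_filter] at hxn
    push_neg at hxn
    rw [hxn hx]
    norm_num
  set r := T'.card with hr
  let e : Fin r ≃ {x // x ∈ T'} := T'.equivFin.symm
  have hmem : ∀ i : Fin r, ((e i : ℂ)) ∈ T' := fun i => (e i).2
  have hsum_eq : ∀ k : ℕ, (∑ i : Fin r, (χm (e i : ℂ) : ℂ) * ((e i : ℂ))⁻¹ ^ k)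
      = ∑ ρ ∈ T', (χm ρ : ℂ) * (ρ⁻¹ : ℂ) ^ k := by
    intro k
    rw [← Finset.sum_coe_sort T' (fun ρ => (χm ρ : ℂ) * (ρ⁻¹ : ℂ) ^ k)]
    exact Equiv.sum_comp e (fun y => (χm (y : ℂ) : ℂ) * ((y : ℂ))⁻¹ ^ k)
  have hlninj : Function.Injective (fun i : Fin r => ((e i : ℂ))⁻¹) := by
    intro i j hij
    apply e.injective
    apply Subtype.val_injective
    exact inv_injective hij
  have hln0 : ∀ i : Fin r, ((e i : ℂ))⁻¹ ≠ 0 := fun i =>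
    inv_ne_zero (hTz _ (Finset.filter_subset _ _ (hmem i)))
  have hχ0 : ∀ i : Fin r, χm (e i : ℂ) ≠ 0 := fun i =>
    (Finset.mem_filter.1 (hmem i)).2
  have hbint : ∀ k, 1 ≤ k → (((a k : ℤ) : ℤ) : ℂ)
      = ∑ i : Fin r, (χm (e i : ℂ) : ℂ) * ((e i : ℂ))⁻¹ ^ k := by
    intro k hk
    rw [hsum_eq k, ← hak' k hk]
    push_cast
    rfl
  refine ⟨r, fun i => χm (e i : ℂ), fun i => ((e i : ℂ))⁻¹, hlninj, hln0, ?_, ?_⟩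
  · intro i
    exact isIntegral_of_powersums _ _ hlninj hln0 hχ0 (fun k => (a k : ℤ)) hbint i
  · intro k hk
    rw [hsum_eq k]
    exact hak' k hk

lemma backward_dir (r : ℕ) (χ : Fin r → ℤ) (lam : Fin r → ℂ)
    (hsum : ∀ k : ℕ, 1 ≤ k → (a k : ℂ) = ∑ i, (χ i : ℂ) * lam i ^ k) :
    ∃ P Q : Polynomial ℂ, Q.coeff 0 ≠ 0 ∧
      (Q : ℂ⟦X⟧) * psExpC (gser a) = (P : ℂ⟦X⟧) := by
  classical
  set g := gser a with hg
  have hg0 := gser_const a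
  set Qp : Polynomial ℂ := ∏ i, (1 - Polynomial.C (lam i) * Polynomial.X) ^ ((χ i).toNat)
    with hQp
  set Pp : Polynomial ℂ := ∏ i, (1 - Polynomial.C (lam i) * Polynomial.X) ^ ((-χ i).toNat)
    with hPp
  have hcast : ∀ (m : Fin r → ℕ),
      ((∏ i, (1 - Polynomial.C (lam i) * Polynomial.X) ^ (m i) : Polynomial ℂ) : ℂ⟦X⟧)
        = ∏ i, (1 - PowerSeries.C (lam i) * PowerSeries.X) ^ (m i) := by
    intro m
    rw [show ((∏ i, (1 - Polynomial.C (lam i) * Polynomial.X) ^ (m i) : Polynomial ℂ) : ℂ⟦X⟧)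
        = Polynomial.coeToPowerSeries.ringHom (∏ i, (1 - Polynomial.C (lam i) * Polynomial.X) ^ (m i)) from rfl]
    rw [map_prod]
    apply Finset.prod_congr rfl
    intro i _
    rw [map_pow, map_sub, map_one, map_mul]
    rw [show Polynomial.coeToPowerSeries.ringHom (Polynomial.C (lam i)) = PowerSeries.C (lam i)
        from Polynomial.coe_C (lam i),
      show Polynomial.coeToPowerSeries.ringHom (Polynomial.X : Polynomial ℂ) = PowerSeries.X
        from Polynomial.coe_X]
  have hconst : ∀ (m : Fin r → ℕ),
      constantCoeff ((∏ i, (1 - Polynomial.C (lam i) * Polynomial.X) ^ (m i) : Polynomial ℂ) : ℂ⟦X⟧) = 1 := by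
    intro m
    rw [hcast, map_prod]
    apply Finset.prod_eq_one
    intro i _
    rw [map_pow, map_sub, map_one, map_mul, PowerSeries.constantCoeff_X, mul_zero, sub_zero,
      one_pow]
  set SQ : ℂ⟦X⟧ := ∑ i, (χ i).toNat • sers (lam i) with hSQ
  set SP : ℂ⟦X⟧ := ∑ i, (-χ i).toNat • sers (lam i) with hSP
  have hLQ : IsLogD ((Qp : Polynomial ℂ) : ℂ⟦X⟧) SQ := by
    rw [hQp, hcast]
    exact isLogD_finprod _ _ _ fun i _ => isLogD_pow (isLogD_lin (lam i)) _
  have hLP : IsLogD ((Pp : Polynomial ℂ) : ℂ⟦X⟧) SP := by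
    rw [hPp, hcast]
    exact isLogD_finprod _ _ _ fun i _ => isLogD_pow (isLogD_lin (lam i)) _
  rw [IsLogD] at hLP hLQ
  -- A = SP - SQ
  have hA : PowerSeries.X * d⁄dX ℂ g = SP - SQ := by
    ext k
    match k with
    | 0 =>
      have hz : ∀ (m : Fin r → ℕ), (∑ x : Fin r, coeff 0 ((m x) • sers (lam x))) = 0 := by
        intro m
        apply Finset.sum_eq_zero
        intro i _
        rw [map_nsmul, sers, coeff_mk, if_pos rfl, smul_zero]
      rw [PowerSeries.coeff_zero_eq_constantCoeff_apply, map_mul, PowerSeries.constantCoeff_X,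
        zero_mul, map_sub, hSP, hSQ,
        map_sum, map_sum,
        show (∑ x : Fin r, coeff 0 ((-χ x).toNat • sers (lam x))) = 0 from hz _,
        show (∑ x : Fin r, coeff 0 ((χ x).toNat • sers (lam x))) = 0 from hz _, sub_zero]
    | Nat.succ m =>
      rw [PowerSeries.coeff_succ_X_mul, coeff_D_gser, hsum (m + 1) (by omega), map_sub,
        hSP, hSQ, map_sum, map_sum, ← Finset.sum_sub_distrib]
      apply Finset.sum_congr rfl
      intro i _
      rw [map_nsmul, map_nsmul, sers, coeff_mk, if_neg (Nat.succ_ne_zero m)]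
      rw [nsmul_eq_mul, nsmul_eq_mul]
      have hint : (((χ i).toNat : ℂ)) - (((-χ i).toNat : ℂ)) = (χ i : ℂ) := by
        exact_mod_cast congrArg (Int.cast : ℤ → ℂ) (Int.toNat_sub_toNat_neg (χ i))
      simp only [Nat.succ_eq_add_one]
      linear_combination (-(lam i ^ (m + 1))) * hint
  set u : ℂ⟦X⟧ := ((Qp : Polynomial ℂ) : ℂ⟦X⟧) with hu
  have hu0 : constantCoeff u = 1 := hconst _
  have hune : u ≠ 0 := fun h => one_ne_zero (α := ℂ) (by rw [← hu0, h, map_zero])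
  have hP1 : constantCoeff ((Pp : Polynomial ℂ) : ℂ⟦X⟧) = 1 := hconst _
  set F₂ : ℂ⟦X⟧ := ((Pp : Polynomial ℂ) : ℂ⟦X⟧) * u⁻¹ with hF₂
  have hF2u : F₂ * u = ((Pp : Polynomial ℂ) : ℂ⟦X⟧) := by
    rw [hF₂, mul_assoc, PowerSeries.inv_mul_cancel u (by rw [hu0]; exact one_ne_zero), mul_one]
  have hF20 : constantCoeff F₂ = 1 := by
    rw [hF₂, map_mul, hP1, PowerSeries.constantCoeff_inv, hu0, inv_one, one_mul]
  have hXne : (PowerSeries.X : ℂ⟦X⟧) ≠ 0 := PowerSeries.X_ne_zero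
  have hD2 : d⁄dX ℂ F₂ = d⁄dX ℂ g * F₂ := by
    have hDPQ := congrArg (d⁄dX ℂ) hF2u
    rw [Derivation.leibniz, smul_eq_mul, smul_eq_mul] at hDPQ
    apply mul_left_cancel₀ (mul_ne_zero hXne hune)
    calc PowerSeries.X * u * d⁄dX ℂ F₂
        = PowerSeries.X * d⁄dX ℂ ((Pp : Polynomial ℂ) : ℂ⟦X⟧)
            - F₂ * (PowerSeries.X * d⁄dX ℂ u) := by
          linear_combination PowerSeries.X * hDPQ
      _ = ((Pp : Polynomial ℂ) : ℂ⟦X⟧) * SP - F₂ * (u * SQ) := by rw [hLP, hLQ]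
      _ = ((Pp : Polynomial ℂ) : ℂ⟦X⟧) * SP - ((Pp : Polynomial ℂ) : ℂ⟦X⟧) * SQ := by
          rw [← hF2u]; ring
      _ = (F₂ * u) * (SP - SQ) := by rw [hF2u]; ring
      _ = (F₂ * u) * (PowerSeries.X * d⁄dX ℂ g) := by rw [hA]
      _ = PowerSeries.X * u * (d⁄dX ℂ g * F₂) := by ring
  have hEq : psExpC g = F₂ :=
    eq_of_derivative_eq (d⁄dX ℂ g) _ _ (derivative_psExpC hg0) hD2
      (by rw [constantCoeff_psExpC, hF20])
  refine ⟨Pp, Qp, ?_, ?_⟩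
  · have hq1 : Qp.coeff 0 = 1 := by
      rw [← Polynomial.constantCoeff_coe]
      exact hconst _
    rw [hq1]
    exact one_ne_zero
  · rw [show psExpC (gser a) = psExpC g from rfl, hEq, mul_comm]
    exact hF2u

end AbstractA
end SyncZeta

/-- Let `φ, ψ` be a synchronously tame pair of self-maps of a set `X`,
with synchronization zeta function `S_{φ,ψ}(z) = exp (Σ_{k≥1} (#S(φ^k, ψ^k)/k) z^k)` over
`ℂ`. Then `S_{φ,ψ}` is rational if and only if there exist `r ∈ ℕ`, integers `χ₁, …, χ_r`
and pairwise distinct nonzero algebraic integers `λ₁, …, λ_r ∈ ℂ` such that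
`#S(φ^k, ψ^k) = Σ_i χ_i λ_i^k` for every `k ≥ 1`. -/
theorem synchronization_zeta_rational_iff_counts_eigenvalue_sum
    {X : Type*} (φ ψ : X → X)
    (htame : ∀ n : ℕ, 1 ≤ n → {x : X | φ^[n] x = ψ^[n] x}.Finite) :
    (∃ P Q : Polynomial ℂ, Q.coeff 0 ≠ 0 ∧
        (Q : PowerSeries ℂ) *
          psExpC (PowerSeries.mk fun n =>
            if n = 0 then 0
            else (Nat.card {x : X | φ^[n] x = ψ^[n] x} : ℂ) / n) =
        (P : PowerSeries ℂ)) ↔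
      (∃ (r : ℕ) (χ : Fin r → ℤ) (lam : Fin r → ℂ),
        Function.Injective lam ∧ (∀ i, lam i ≠ 0) ∧ (∀ i, IsIntegral ℤ (lam i)) ∧
        ∀ k : ℕ, 1 ≤ k →
          (Nat.card {x : X | φ^[k] x = ψ^[k] x} : ℂ) = ∑ i, (χ i : ℂ) * lam i ^ k) := by
  constructor
  · rintro ⟨P, Q, hQ0, hPQ⟩
    exact SyncZeta.forward_dir (fun n => Nat.card {x : X | φ^[n] x = ψ^[n] x}) P Q hQ0 hPQ
  · rintro ⟨r, χ, lam, -, -, -, hsum⟩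
    exact SyncZeta.backward_dir (fun n => Nat.card {x : X | φ^[n] x = ψ^[n] x}) r χ lam hsum
end

section
/- Let λ_1, …, λ_r ∈ ℂ be pairwise distinct algebraic numbers over ℚ and χ_1, …, χ_r ∈ ℤ be integers such that Σ_{i=1}^{r} χ_i · λ_i^k ∈ ℤ for every k ≥ 1. If λ_i and λ_j are algebraically conjugate, i.e. have the same minimal polynomial over ℚ, then χ_i = χ_j. -/
open Polynomial Finset

/-- Power functions at distinct points are linearly independent. -/
lemma aux_pow_vanish {ι : Type*} [Fintype ι] (x : ι → ℂ) (hx : Function.Injective x)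
    (c : ι → ℂ) (h : ∀ k : ℕ, ∑ t, c t * x t ^ k = 0) : ∀ t, c t = 0 := by
  have hinj : Function.Injective (fun t => powersHom ℂ (x t)) := by
    intro a b hab
    apply hx
    have := congrArg (fun f : Multiplicative ℕ →* ℂ => f (Multiplicative.ofAdd 1)) hab
    simpa [powersHom_apply] using this
  have li := (linearIndependent_monoidHom (Multiplicative ℕ) ℂ).comp
      (fun t => powersHom ℂ (x t)) hinj
  rw [Fintype.linearIndependent_iff] at li
  intro t
  refine li c ?_ t
  funext s
  have := h (Multiplicative.toAdd s)
  simpa [Finset.sum_apply, powersHom_apply] using this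

/-- Let `λ₁, …, λ_r ∈ ℂ` be pairwise distinct algebraic numbers over `ℚ`
and `χ₁, …, χ_r ∈ ℤ` be integers such that `Σ_i χ_i·λ_i^k ∈ ℤ` for every `k ≥ 1`. If `λ_i`
and `λ_j` are algebraically conjugate (have the same minimal polynomial over `ℚ`), then
`χ_i = χ_j`. -/
theorem coeffs_eq_of_conjugate
    (r : ℕ) (lam : Fin r → ℂ) (χ : Fin r → ℤ)
    (hdist : Function.Injective lam)
    (halg : ∀ i, IsAlgebraic ℚ (lam i))
    (hint : ∀ k : ℕ, 1 ≤ k → ∃ m : ℤ, ∑ i, (χ i : ℂ) * lam i ^ k = (m : ℂ))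
    (i j : Fin r) (hconj : minpoly ℚ (lam i) = minpoly ℚ (lam j)) :
    χ i = χ j := by
  classical
  by_cases hij : i = j
  · exact hij ▸ rfl
  by_cases h0 : lam j = 0
  · exfalso
    apply hij
    apply hdist
    have : minpoly ℚ (lam i) = Polynomial.X := by rw [hconj, h0, minpoly.zero]
    have h1 := minpoly.aeval ℚ (lam i)
    rw [this] at h1
    simpa [h0] using h1
  -- set up the algebraic closure
  set K := AlgebraicClosure ℚ with hK
  haveI : Algebra.IsAlgebraic ℚ K := AlgebraicClosure.isAlgebraic ℚ
  haveI : Normal ℚ K :=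
    @IsAlgClosure.normal ℚ (AlgebraicClosure ℚ) _ _ (AlgebraicClosure.instAlgebra ℚ) inferInstance
  let emb : K →ₐ[ℚ] ℂ := IsAlgClosed.lift
  have hembinj : Function.Injective emb := emb.injective
  -- every lam m is in the range of emb
  have hrange : ∀ m, ∃ μ : K, emb μ = lam m := by
    intro m
    set p := minpoly ℚ (lam m) with hp
    have hp0 : p ≠ 0 := minpoly.ne_zero (halg m).isIntegral
    have hmem : lam m ∈ (p.map (algebraMap ℚ ℂ)).roots := by
      rw [Polynomial.mem_roots ((Polynomial.map_ne_zero_iff (algebraMap ℚ ℂ).injective).mpr hp0)]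
      rw [Polynomial.IsRoot, Polynomial.eval_map, ← Polynomial.aeval_def]
      exact minpoly.aeval ℚ (lam m)
    have hfac : p.map (algebraMap ℚ ℂ) = (p.map (algebraMap ℚ K)).map (emb : K →+* ℂ) := by
      rw [Polynomial.map_map, emb.comp_algebraMap]
    have hsplit : Polynomial.Splits (p.map (algebraMap ℚ K)) :=
      IsAlgClosed.splits _
    rw [hfac, hsplit.roots_map _] at hmem
    obtain ⟨μ, _, hμ⟩ := Multiset.mem_map.mp hmem
    exact ⟨μ, hμ⟩
  choose μ hμ using hrange
  have hμminpoly : ∀ m, minpoly ℚ (μ m) = minpoly ℚ (lam m) := by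
    intro m
    rw [← hμ m]
    exact (minpoly.algHom_eq emb hembinj (μ m)).symm
  -- get an automorphism of K sending μ i to μ j
  have hconjK : IsConjRoot ℚ (μ j) (μ i) := by
    rw [IsConjRoot, hμminpoly, hμminpoly, hconj]
  obtain ⟨σ, hσ⟩ := hconjK.exists_algEquiv
  -- the conjugated family
  set ν : Fin r → ℂ := fun m => emb (σ (μ m)) with hν
  have hνinj : Function.Injective ν := by
    intro a b hab
    apply hdist
    rw [← hμ a, ← hμ b]
    exact congrArg emb (σ.injective (hembinj hab))
  have hνi : ν i = lam j := by rw [hν]; simp only []; rw [hσ, hμ]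
  -- key identity: the conjugated power sums agree with the original ones
  have hkey : ∀ k : ℕ, 1 ≤ k → ∑ m, (χ m : ℂ) * ν m ^ k = ∑ m, (χ m : ℂ) * lam m ^ k := by
    intro k hk
    obtain ⟨n, hn⟩ := hint k hk
    have h1 : emb (∑ m, (χ m : K) * μ m ^ k) = ∑ m, (χ m : ℂ) * lam m ^ k := by
      rw [map_sum]
      refine Finset.sum_congr rfl fun m _ => ?_
      rw [map_mul, map_pow, map_intCast, hμ]
    have h2 : (∑ m, (χ m : K) * μ m ^ k) = (n : K) := by
      apply hembinj
      rw [h1, hn, map_intCast]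
    have h3 : (∑ m, (χ m : K) * σ (μ m) ^ k) = (n : K) := by
      have := congrArg σ h2
      rw [map_sum, map_intCast] at this
      rw [← this]
      refine Finset.sum_congr rfl fun m _ => ?_
      rw [map_mul, map_pow, map_intCast]
    have h4 : (∑ m, (χ m : ℂ) * ν m ^ k) = (n : ℂ) := by
      have := congrArg emb h3
      rw [map_sum, map_intCast] at this
      rw [← this]
      refine Finset.sum_congr rfl fun m _ => ?_
      rw [map_mul, map_pow, map_intCast]
    rw [h4, hn]
  -- combine into one family over the union of values
  set T : Finset ℂ := (Finset.univ.image lam) ∪ (Finset.univ.image ν) with hT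
  set c : ℂ → ℂ := fun x =>
    (∑ m ∈ Finset.univ.filter (fun m => lam m = x), (χ m : ℂ)) -
    (∑ m ∈ Finset.univ.filter (fun m => ν m = x), (χ m : ℂ)) with hc
  have hlamsum : ∀ k : ℕ, ∑ x ∈ T, (∑ m ∈ Finset.univ.filter (fun m => lam m = x),
      (χ m : ℂ)) * x ^ k = ∑ m, (χ m : ℂ) * lam m ^ k := by
    intro k
    rw [← Finset.sum_fiberwise_of_maps_to (g := lam)
      (fun m _ => Finset.mem_union_left _ (Finset.mem_image_of_mem lam (Finset.mem_univ m)))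
      (fun m => (χ m : ℂ) * lam m ^ k)]
    refine Finset.sum_congr rfl fun x _ => ?_
    rw [Finset.sum_mul]
    refine Finset.sum_congr rfl fun m hm => ?_
    rw [(Finset.mem_filter.mp hm).2]
  have hνsum : ∀ k : ℕ, ∑ x ∈ T, (∑ m ∈ Finset.univ.filter (fun m => ν m = x),
      (χ m : ℂ)) * x ^ k = ∑ m, (χ m : ℂ) * ν m ^ k := by
    intro k
    rw [← Finset.sum_fiberwise_of_maps_to (g := ν)
      (fun m _ => Finset.mem_union_right _ (Finset.mem_image_of_mem ν (Finset.mem_univ m)))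
      (fun m => (χ m : ℂ) * ν m ^ k)]
    refine Finset.sum_congr rfl fun x _ => ?_
    rw [Finset.sum_mul]
    refine Finset.sum_congr rfl fun m hm => ?_
    rw [(Finset.mem_filter.mp hm).2]
  have hczero : ∀ k : ℕ, 1 ≤ k → ∑ x ∈ T, c x * x ^ k = 0 := by
    intro k hk
    have : ∑ x ∈ T, c x * x ^ k =
        (∑ x ∈ T, (∑ m ∈ Finset.univ.filter (fun m => lam m = x), (χ m : ℂ)) * x ^ k) -
        (∑ x ∈ T, (∑ m ∈ Finset.univ.filter (fun m => ν m = x), (χ m : ℂ)) * x ^ k) := by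
      rw [← Finset.sum_sub_distrib]
      refine Finset.sum_congr rfl fun x _ => ?_
      rw [hc]; ring
    rw [this, hlamsum, hνsum, hkey k hk, sub_self]
  -- apply linear independence of power functions over the subtype of T
  have hfinal : ∀ x ∈ T, c x * x = 0 := by
    intro x hx
    have := aux_pow_vanish (fun t : T => (t : ℂ)) Subtype.coe_injective
      (fun t : T => c t * t) ?_ ⟨x, hx⟩
    · exact this
    · intro k
      have := hczero (k + 1) (Nat.le_add_left 1 k)
      rw [← Finset.sum_attach T (fun x => c x * x ^ (k+1))] at this
      rw [← this]
      refine Finset.sum_congr rfl fun t _ => ?_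
      ring
  have hlamjT : lam j ∈ T :=
    Finset.mem_union_left _ (Finset.mem_image_of_mem lam (Finset.mem_univ j))
  have hcj : c (lam j) = 0 := by
    have := hfinal (lam j) hlamjT
    rcases mul_eq_zero.mp this with h | h
    · exact h
    · exact absurd h h0
  have hfilter1 : Finset.univ.filter (fun m => lam m = lam j) = {j} := by
    ext m
    simp [hdist.eq_iff]
  have hfilter2 : Finset.univ.filter (fun m => ν m = lam j) = {i} := by
    ext m
    simp only [Finset.mem_filter, Finset.mem_univ, true_and, Finset.mem_singleton]
    constructor
    · intro h
      exact hνinj (h.trans hνi.symm)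
    · intro h
      rw [h, hνi]
  rw [hc] at hcj
  simp only [hfilter1, hfilter2, Finset.sum_singleton, sub_eq_zero] at hcj
  exact_mod_cast hcj.symm
end

section
/- Let (X, d) be a compact metric space and α, β : X → X commuting homeomorphisms forming a synchronously tame pair, and set f := β^{−1}∘α. Assume f is expansive (there exists ε > 0 such that for all x ≠ y in X there is n ∈ ℤ with d(f^n x, f^n y) > ε) and satisfies specification (for each ε > 0 there is p(ε) ∈ ℕ such that: given points x_1, …, x_k ∈ X and integer intervals I_1, …, I_k contained in [a, b] with pairwise distance at least p(ε), there exists x ∈ X with f^{b−a+p(ε)}(x) = x and d(f^j x, f^j x_i) < ε for all j ∈ I_i and all i). Then the growth rate of synchronization points exists and equals lim_{n→∞} (#S(α^n, β^n))^{1/n} = exp(h(f)), where h(f) is the topological entropy of f. -/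
open Filter

/-- A homeomorphism `f` of a metric space is expansive if there is `ε > 0` such that any
two distinct points are separated beyond `ε` by some (positive or negative) iterate. -/
def ExpansiveHomeo {X : Type*} [MetricSpace X] (f : X ≃ₜ X) : Prop :=
  ∃ ε : ℝ, 0 < ε ∧ ∀ x y : X, x ≠ y →
    ∃ n : ℤ, ε < dist ((f.toEquiv ^ n) x) ((f.toEquiv ^ n) y)

/-- Bowen's specification property for a homeomorphism `f`: for every `ε > 0` there is
`p(ε) ∈ ℕ` such that, given finitely many points `x i` and integer intervals
`[l i, u i] ⊆ [a, b]` with pairwise distance at least `p(ε)`, there is a point `x₀` with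
`f^{b−a+p(ε)} x₀ = x₀` shadowing each orbit segment with precision `ε`. -/
def SpecificationHomeo {X : Type*} [MetricSpace X] (f : X ≃ₜ X) : Prop :=
  ∀ ε : ℝ, 0 < ε → ∃ p : ℕ,
    ∀ (k : ℕ) (x : Fin k → X) (a b : ℤ) (l u : Fin k → ℤ),
      (∀ i, a ≤ l i ∧ l i ≤ u i ∧ u i ≤ b) →
      (∀ i j, i ≠ j → ∀ s ∈ Set.Icc (l i) (u i), ∀ t ∈ Set.Icc (l j) (u j),
        (p : ℤ) ≤ |s - t|) →
      ∃ x₀ : X, (f.toEquiv ^ (b - a + p)) x₀ = x₀ ∧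
        ∀ i, ∀ m ∈ Set.Icc (l i) (u i),
          dist ((f.toEquiv ^ m) x₀) ((f.toEquiv ^ m) (x i)) < ε

namespace BowenAux

open Dynamics Set UniformSpace

variable {X : Type*} [MetricSpace X]

lemma zpow_natCast_apply (f : X ≃ₜ X) (n : ℕ) (x : X) :
    (f.toEquiv ^ (n : ℤ)) x = (⇑f)^[n] x := by
  rw [zpow_natCast, ← Equiv.Perm.iterate_eq_pow]
  simp

lemma zpow_add_apply (f : X ≃ₜ X) (a b : ℤ) (y : X) :
    (f.toEquiv ^ (a + b)) y = (f.toEquiv ^ a) ((f.toEquiv ^ b) y) := by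
  rw [zpow_add, Equiv.Perm.mul_apply]

lemma zpow_mod_apply (f : X ≃ₜ X) {n : ℕ} (hn : 0 < n) {x : X} (hx : (⇑f)^[n] x = x) (m : ℤ) :
    (f.toEquiv ^ m) x = (⇑f)^[(m % n).toNat] x := by
  have hfix : (f.toEquiv ^ (n : ℤ)) x = x := by rw [zpow_natCast_apply]; exact hx
  have h1 : (f.toEquiv ^ ((n : ℤ) * (m / n))) x = x := by
    rw [zpow_mul]
    exact Equiv.Perm.zpow_apply_eq_self_of_apply_eq_self hfix _
  calc (f.toEquiv ^ m) x = (f.toEquiv ^ (m % n + (n : ℤ) * (m / n))) x := by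
        rw [Int.emod_add_mul_ediv]
    _ = (f.toEquiv ^ (m % n)) ((f.toEquiv ^ ((n : ℤ) * (m / n))) x) := zpow_add_apply ..
    _ = (f.toEquiv ^ (m % n)) x := by rw [h1]
    _ = (⇑f)^[(m % n).toNat] x := by
        rw [← zpow_natCast_apply, Int.toNat_of_nonneg (Int.emod_nonneg m (by exact_mod_cast hn.ne'))]

lemma logNat (k : ℕ) (hk : 0 < k) : ENNReal.log (k : ENNReal) = ((Real.log k : ℝ) : EReal) := by
  rw [← ENNReal.ofReal_natCast, ENNReal.log_ofReal_of_pos (by exact_mod_cast hk)]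

/-- From the specification property (instantiated at precision `δ/2`), gluing orbit segments
from a `(U, n)`-dynamical net produces many periodic points of period `m`. -/
lemma glue_count (f : X ≃ₜ X) {δ : ℝ} (hδ : 0 < δ) {p : ℕ}
    (hp : ∀ (k : ℕ) (x : Fin k → X) (a b : ℤ) (l u : Fin k → ℤ),
      (∀ i, a ≤ l i ∧ l i ≤ u i ∧ u i ≤ b) →
      (∀ i j, i ≠ j → ∀ s ∈ Set.Icc (l i) (u i), ∀ t ∈ Set.Icc (l j) (u j),
        (p : ℤ) ≤ |s - t|) →
      ∃ x₀ : X, (f.toEquiv ^ (b - a + p)) x₀ = x₀ ∧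
        ∀ i, ∀ m ∈ Set.Icc (l i) (u i),
          dist ((f.toEquiv ^ m) x₀) ((f.toEquiv ^ m) (x i)) < δ / 2)
    {U : Set (X × X)} (hU : ∀ a b : X, dist a b < δ → (a, b) ∈ U)
    {n : ℕ} (hn : 1 ≤ n) {s : Finset X}
    (hs : IsDynNetIn ⇑f Set.univ U n ↑s)
    {m : ℕ} (hm : 1 ≤ m) (hfin : {x : X | (⇑f)^[m] x = x}.Finite) :
    s.card ^ (m / (n + p)) ≤ Nat.card {x : X | (⇑f)^[m] x = x} := by
  classical
  haveI := hfin.to_subtype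
  have hne : ∃ x : X, (⇑f)^[m] x = x := by
    obtain ⟨x₀, hx₀, -⟩ := hp 0 Fin.elim0 0 ((m : ℤ) - p) Fin.elim0 Fin.elim0
      (fun i => i.elim0) (fun i => i.elim0)
    refine ⟨x₀, ?_⟩
    have he : ((m : ℤ) - p - 0 + p) = (m : ℤ) := by ring
    rw [he, zpow_natCast_apply] at hx₀
    exact hx₀
  haveI : Nonempty {x : X | (⇑f)^[m] x = x} := ⟨⟨hne.choose, hne.choose_spec⟩⟩
  set q := m / (n + p) with hq
  rcases Nat.eq_zero_or_pos q with hq0 | hq1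
  · rw [hq0, pow_zero]
    exact Nat.one_le_iff_ne_zero.2 Nat.card_pos.ne'
  set l : Fin q → ℤ := fun i => (i : ℕ) * ((n : ℤ) + p) with hl
  set u : Fin q → ℤ := fun i => l i + n - 1 with hu
  have hmul : ∀ i : Fin q, ((i : ℕ) + 1) * (n + p) ≤ m := by
    intro i
    have h1 : (i : ℕ) + 1 ≤ q := i.isLt
    have h2 : q * (n + p) ≤ m := Nat.div_mul_le_self m (n + p)
    have h3 : ((i : ℕ) + 1) * (n + p) ≤ q * (n + p) := Nat.mul_le_mul_right _ h1
    omega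
  have hbounds : ∀ i, (0 : ℤ) ≤ l i ∧ l i ≤ u i ∧ u i ≤ (m : ℤ) - p := by
    intro i
    have h1 := hmul i
    refine ⟨by positivity, by simp only [hu]; omega, ?_⟩
    have h2 : (((i : ℕ) : ℤ) + 1) * ((n : ℤ) + p) ≤ (m : ℤ) := by exact_mod_cast h1
    simp only [hu, hl]
    nlinarith [h2]
  have hsep0 : ∀ i j : Fin q, (i : ℕ) < (j : ℕ) →
      ∀ s' ∈ Set.Icc (l i) (u i), ∀ t ∈ Set.Icc (l j) (u j), (p : ℤ) ≤ t - s' := by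
    intro i j hij s' hs' t ht
    have h1 : s' ≤ u i := hs'.2
    have h2 : l j ≤ t := ht.1
    have h3 : ((i : ℕ) : ℤ) + 1 ≤ ((j : ℕ) : ℤ) := by exact_mod_cast hij
    have h4 : (((i : ℕ) : ℤ) + 1) * ((n : ℤ) + p) ≤ ((j : ℕ) : ℤ) * ((n : ℤ) + p) := by
      apply mul_le_mul_of_nonneg_right h3 (by positivity)
    simp only [hu, hl] at h1 h2
    nlinarith [h4]
  have hsep : ∀ i j, i ≠ j → ∀ s' ∈ Set.Icc (l i) (u i), ∀ t ∈ Set.Icc (l j) (u j),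
      (p : ℤ) ≤ |s' - t| := by
    intro i j hij s' hs' t ht
    rcases Nat.lt_or_ge (i : ℕ) (j : ℕ) with h | h
    · have := hsep0 i j h s' hs' t ht
      rw [abs_sub_comm]
      exact this.trans (le_abs_self _)
    · have hlt : (j : ℕ) < (i : ℕ) := by
        rcases Nat.lt_or_ge (j : ℕ) (i : ℕ) with h' | h'
        · exact h'
        · exact absurd (Fin.ext (le_antisymm h' h)) hij
      have := hsep0 j i hlt t ht s' hs'
      exact this.trans (le_abs_self _)
  have spec : ∀ e : Fin q → {y // y ∈ s}, ∃ x₀ : X,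
      (⇑f)^[m] x₀ = x₀ ∧
      ∀ i, ∀ m' ∈ Set.Icc (l i) (u i),
        dist ((f.toEquiv ^ m') x₀)
          ((f.toEquiv ^ m') ((f.toEquiv ^ (-(l i))) ((e i : X)))) < δ / 2 := by
    intro e
    obtain ⟨x₀, h1, h2⟩ := hp q (fun i => (f.toEquiv ^ (-(l i))) ((e i : X))) 0 ((m : ℤ) - p)
      l u hbounds hsep
    refine ⟨x₀, ?_, h2⟩
    have he : ((m : ℤ) - p - 0 + p) = (m : ℤ) := by ring
    rw [he, zpow_natCast_apply] at h1
    exact h1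
  set Φ : (Fin q → {y // y ∈ s}) → X := fun e => (spec e).choose with hΦ
  have hΦfix : ∀ e, (⇑f)^[m] (Φ e) = Φ e := fun e => (spec e).choose_spec.1
  have hΦshadow : ∀ e : Fin q → {y // y ∈ s}, ∀ i : Fin q, ∀ k : ℕ, k < n →
      dist ((⇑f)^[k] ((e i : X))) ((⇑f)^[k] ((f.toEquiv ^ (l i)) (Φ e))) < δ / 2 := by
    intro e i k hk
    have hmem : l i + (k : ℤ) ∈ Set.Icc (l i) (u i) := by
      constructor
      · omega
      · simp only [hu]; omega
    have h := (spec e).choose_spec.2 i (l i + (k : ℤ)) hmem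
    have hA : (f.toEquiv ^ (l i + (k : ℤ))) (Φ e)
        = (⇑f)^[k] ((f.toEquiv ^ (l i)) (Φ e)) := by
      rw [add_comm, zpow_add_apply, zpow_natCast_apply]
    have hB : (f.toEquiv ^ (l i + (k : ℤ))) ((f.toEquiv ^ (-(l i))) ((e i : X)))
        = (⇑f)^[k] ((e i : X)) := by
      rw [← zpow_add_apply]
      have : l i + (k : ℤ) + -(l i) = (k : ℤ) := by ring
      rw [this, zpow_natCast_apply]
    rw [hA, hB] at h
    rw [dist_comm]
    exact h
  have hinj : Function.Injective Φ := by
    intro e e' hee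
    by_contra hne'
    obtain ⟨i, hi⟩ := Function.ne_iff.1 hne'
    have hci : ((e i : X)) ≠ ((e' i : X)) := fun hc => hi (Subtype.ext hc)
    have hdisj := hs.2 (e i).2 (e' i).2 hci
    set w := (f.toEquiv ^ (l i)) (Φ e) with hw
    have claim1 : w ∈ ball ((e i : X)) (dynEntourage ⇑f U n) := by
      show ((e i : X), w) ∈ dynEntourage ⇑f U n
      rw [mem_dynEntourage]
      intro k hk
      exact hU _ _ ((hΦshadow e i k hk).trans (by linarith))
    have claim2 : w ∈ ball ((e' i : X)) (dynEntourage ⇑f U n) := by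
      show ((e' i : X), w) ∈ dynEntourage ⇑f U n
      rw [mem_dynEntourage]
      intro k hk
      have h5 := hΦshadow e' i k hk
      rw [← hee] at h5
      exact hU _ _ (h5.trans (by linarith))
    exact Set.disjoint_left.1 hdisj claim1 claim2
  have hinj' : Function.Injective
      (fun e : Fin q → {y // y ∈ s} => (⟨Φ e, hΦfix e⟩ : {x : X | (⇑f)^[m] x = x})) := by
    intro e e' h
    exact hinj (congrArg Subtype.val h)
  have hcard := Nat.card_le_card_of_injective _ hinj'
  calc s.card ^ q = Nat.card (Fin q → {y // y ∈ s}) := by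
        rw [Nat.card_eq_fintype_card, Fintype.card_fun, Fintype.card_coe, Fintype.card_fin]
    _ ≤ Nat.card {x : X | (⇑f)^[m] x = x} := hcard

end BowenAux

open Dynamics Set UniformSpace Uniformity Topology

/-- Let `(X, d)` be a compact metric space and `α, β : X → X` commuting
homeomorphisms forming a synchronously tame pair, and set `f := β⁻¹ ∘ α`. If `f` is
expansive and satisfies specification, then the growth rate of synchronization points
exists and `lim (#S(αⁿ, βⁿ))^{1/n} = exp (h(f))`, where `h(f)` is the topological entropy
of `f`. -/
theorem growth_rate_synchronization_eq_exp_entropy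
    {X : Type*} [MetricSpace X] [CompactSpace X]
    (α β : X ≃ₜ X)
    (hcomm : ∀ x : X, α (β x) = β (α x))
    (htame : ∀ n : ℕ, 1 ≤ n → {x : X | (⇑α)^[n] x = (⇑β)^[n] x}.Finite)
    (f : X ≃ₜ X) (hf : f = α.trans β.symm)
    (hexp : ExpansiveHomeo f)
    (hspec : SpecificationHomeo f) :
    Tendsto (fun n : ℕ =>
        (Nat.card {x : X | (⇑α)^[n] x = (⇑β)^[n] x} : ℝ) ^ ((1 : ℝ) / n))
      atTop
      (nhds (Real.exp (Dynamics.coverEntropy (⇑f) Set.univ).toReal)) := by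
  classical
  obtain ⟨ε0, hε0, hexp'⟩ := hexp
  -- `f` as a composition, and identification of synchronization sets with periodic points
  have hcomm' : Function.Commute (⇑β.symm) (⇑α) := by
    intro x
    have h1 : α (β (β.symm x)) = β (α (β.symm x)) := hcomm _
    rw [Homeomorph.apply_symm_apply] at h1
    calc (⇑β.symm) ((⇑α) x) = β.symm (β (α (β.symm x))) := by rw [← h1]
      _ = α (β.symm x) := Homeomorph.symm_apply_apply _ _
  have hfiter : ∀ n : ℕ, (⇑f)^[n] = (⇑β.symm)^[n] ∘ (⇑α)^[n] := by
    intro n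
    have hfc : ⇑f = (⇑β.symm) ∘ (⇑α) := by rw [hf]; rfl
    rw [hfc, hcomm'.comp_iterate]
  have hFixSet : ∀ n : ℕ, {x : X | (⇑α)^[n] x = (⇑β)^[n] x} = {x : X | (⇑f)^[n] x = x} := by
    intro n
    ext x
    simp only [Set.mem_setOf_eq, hfiter n, Function.comp_apply]
    constructor
    · intro h
      rw [h]
      exact Function.LeftInverse.iterate β.symm_apply_apply n _
    · intro h
      conv_rhs => rw [← h]
      exact (Function.LeftInverse.iterate β.apply_symm_apply n _).symm
  have hFin : ∀ n : ℕ, 1 ≤ n → {x : X | (⇑f)^[n] x = x}.Finite := by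
    intro n hn
    rw [← hFixSet n]
    exact htame n hn
  obtain ⟨p₁, hp₁⟩ := hspec 1 one_pos
  have hne : ∀ m : ℕ, ∃ x : X, (⇑f)^[m] x = x := by
    intro m
    obtain ⟨x₀, hx₀, -⟩ := hp₁ 0 Fin.elim0 0 ((m : ℤ) - p₁) Fin.elim0 Fin.elim0
      (fun i => i.elim0) (fun i => i.elim0)
    refine ⟨x₀, ?_⟩
    have he : ((m : ℤ) - p₁ - 0 + p₁) = (m : ℤ) := by ring
    rw [he, BowenAux.zpow_natCast_apply] at hx₀
    exact hx₀
  haveI hXne : Nonempty X := ⟨(hne 1).choose⟩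
  have hP1 : ∀ m : ℕ, 1 ≤ m → 1 ≤ Nat.card {x : X | (⇑f)^[m] x = x} := by
    intro m hm
    haveI := (hFin m hm).to_subtype
    haveI : Nonempty {x : X | (⇑f)^[m] x = x} := ⟨⟨(hne m).choose, (hne m).choose_spec⟩⟩
    exact Nat.card_pos
  set v : ℕ → EReal :=
    fun m => ENNReal.log (Nat.card {x : X | (⇑f)^[m] x = x} : ENNReal) / (m : EReal) with hv
  have hvrepr : ∀ m : ℕ, 1 ≤ m →
      v m = ((Real.log (Nat.card {x : X | (⇑f)^[m] x = x}) / m : ℝ) : EReal) := by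
    intro m hm
    simp only [hv]
    rw [BowenAux.logNat _ (hP1 m hm), ← EReal.coe_coe_eq_natCast, ← EReal.coe_div]
  -- upper bound via expansiveness
  set U0 : Set (X × X) := {q : X × X | dist q.1 q.2 ≤ ε0 / 2} with hU0def
  have hU0 : U0 ∈ 𝓤 X := by
    rw [Metric.mem_uniformity_dist]
    exact ⟨ε0 / 2, by positivity, fun {a b} h => le_of_lt h⟩
  have hU0symm : Prod.swap ⁻¹' U0 = U0 := by
    show Prod.swap ⁻¹' U0 = U0
    ext ⟨a, b⟩
    simp [hU0def, dist_comm]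
  have hPle : ∀ m : ℕ, 1 ≤ m →
      ((Nat.card {x : X | (⇑f)^[m] x = x} : ℕ) : ℕ∞) ≤ netMaxcard ⇑f Set.univ U0 m := by
    intro m hm
    have hfin := hFin m hm
    have hnet : IsDynNetIn ⇑f Set.univ U0 m ↑hfin.toFinset := by
      refine ⟨Set.subset_univ _, ?_⟩
      intro x hx y hy hxy
      simp only [Set.Finite.coe_toFinset, Set.mem_setOf_eq] at hx hy
      simp only [Function.onFun]
      rw [Set.disjoint_left]
      intro z hzx hzy
      have hzx2 : (x, z) ∈ dynEntourage ⇑f U0 m := hzx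
      have hzy2 : (y, z) ∈ dynEntourage ⇑f U0 m := hzy
      have hm0 : 0 < m := hm
      obtain ⟨j, hj⟩ := hexp' x y hxy
      have hx' := BowenAux.zpow_mod_apply f hm0 hx j
      have hy' := BowenAux.zpow_mod_apply f hm0 hy j
      rw [hx', hy'] at hj
      set k := (j % (m : ℤ)).toNat with hk
      have hkm : k < m := by
        have h1 : j % (m : ℤ) < m := Int.emod_lt_of_pos j (by exact_mod_cast hm0)
        have h2 : 0 ≤ j % (m : ℤ) := Int.emod_nonneg j (by exact_mod_cast hm0.ne')
        omega
      have d1 : dist ((⇑f)^[k] x) ((⇑f)^[k] z) ≤ ε0 / 2 := mem_dynEntourage.1 hzx2 k hkm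
      have d2 : dist ((⇑f)^[k] y) ((⇑f)^[k] z) ≤ ε0 / 2 := mem_dynEntourage.1 hzy2 k hkm
      have d3 := dist_triangle_right ((⇑f)^[k] x) ((⇑f)^[k] y) ((⇑f)^[k] z)
      linarith
    have hcard := hnet.card_le_netMaxcard
    have heq : hfin.toFinset.card = Nat.card {x : X | (⇑f)^[m] x = x} := by
      rw [Nat.card_coe_set_eq, Set.ncard_eq_toFinset_card _ hfin]
    rwa [heq] at hcard
  have hup0 : atTop.limsup v ≤ netEntropyEntourage ⇑f Set.univ U0 := by
    have hev : v ≤ᶠ[atTop]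
        fun n : ℕ => ENNReal.log (netMaxcard ⇑f Set.univ U0 n : ENNReal) / (n : EReal) := by
      filter_upwards [eventually_ge_atTop 1] with m hm
      simp only [hv]
      refine EReal.monotone_div_right_of_nonneg (by exact_mod_cast Nat.cast_nonneg' m) ?_
      apply ENNReal.log_monotone
      have h2 := ENat.toENNReal_mono (hPle m hm)
      rwa [ENat.toENNReal_coe] at h2
    exact limsup_le_limsup hev
  have hufin : netEntropyEntourage ⇑f Set.univ U0 < ⊤ :=
    lt_of_le_of_lt (netEntropyEntourage_le_coverEntropyEntourage ⇑f Set.univ)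
      (coverEntropyEntourage_finite_of_isCompact_invariant isCompact_univ
        (Set.mapsTo_univ _ _) hU0)
  have hup : atTop.limsup v ≤ coverEntropy ⇑f Set.univ :=
    hup0.trans (netEntropyEntourage_le_coverEntropy ⇑f Set.univ hU0)
  -- lower bound via specification
  have hlow : ∀ U ∈ 𝓤 X, netEntropyEntourage ⇑f Set.univ U ≤ atTop.liminf v := by
    intro U hU
    obtain ⟨δ, hδ, hδU⟩ := Metric.mem_uniformity_dist.1 hU
    obtain ⟨p, hp⟩ := hspec (δ / 2) (by positivity)
    have hbound : ∀ n : ℕ, 1 ≤ n → ∀ s : Finset X, IsDynNetIn ⇑f Set.univ U n ↑s →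
        ∀ m : ℕ, 1 ≤ m → s.card ^ (m / (n + p)) ≤ Nat.card {x : X | (⇑f)^[m] x = x} := by
      intro n hn s hs m hm
      exact BowenAux.glue_count f hδ hp (fun a b h => hδU h) hn hs hm (hFin m hm)
    have hfin' : ∀ n : ℕ, 1 ≤ n → netMaxcard ⇑f Set.univ U n < ⊤ := by
      intro n hn
      by_contra hcon
      rw [not_lt, top_le_iff, netMaxcard_infinite_iff] at hcon
      obtain ⟨s, hs, hcard⟩ := hcon (Nat.card {x : X | (⇑f)^[n + p] x = x} + 1)
      have h2 := hbound n hn s hs (n + p) (by omega)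
      rw [Nat.div_self (by omega), pow_one] at h2
      omega
    have hL0 : (0 : EReal) ≤ atTop.liminf v := by
      refine le_liminf_of_le (by isBoundedDefault) ?_
      filter_upwards [eventually_ge_atTop 1] with m hm
      simp only [hv]
      apply EReal.div_nonneg
      · rw [ENNReal.zero_le_log_iff]
        exact_mod_cast hP1 m hm
      · exact_mod_cast Nat.cast_nonneg' m
    rcases eq_top_or_lt_top (atTop.liminf v) with hLtop | hLlt
    · rw [hLtop]; exact le_top
    set Lr := (atTop.liminf v).toReal with hLrdef
    have hLr : ((Lr : ℝ) : EReal) = atTop.liminf v :=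
      EReal.coe_toReal hLlt.ne (by intro hbot; rw [hbot] at hL0; simp at hL0)
    have hLr0 : 0 ≤ Lr := by
      have h := hL0
      rw [← hLr] at h
      exact_mod_cast h
    have key1 : ∀ n : ℕ, 1 ≤ n → ∀ s : Finset X, IsDynNetIn ⇑f Set.univ U n ↑s →
        Real.log s.card ≤ ((n : ℝ) + p) * Lr := by
      intro n hn s hs
      rcases Nat.eq_zero_or_pos s.card with h0 | hpos
      · rw [h0]
        simp only [Nat.cast_zero, Real.log_zero]
        positivity
      have hr0 : (0 : ℝ) ≤ Real.log s.card := Real.log_nonneg (by exact_mod_cast hpos)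
      have hnp : (0 : ℝ) < (n : ℝ) + p := by positivity
      have hseq : ∀ᶠ m : ℕ in atTop,
          ((((m / (n + p) : ℕ) : ℝ) * Real.log s.card / m : ℝ) : EReal) ≤ v m := by
        filter_upwards [eventually_ge_atTop 1] with m hm
        rw [hvrepr m hm, EReal.coe_le_coe_iff]
        have hm0 : (0 : ℝ) < m := by exact_mod_cast hm
        have hb := hbound n hn s hs m hm
        have hb' : ((s.card : ℝ)) ^ (m / (n + p) : ℕ)
            ≤ (Nat.card {x : X | (⇑f)^[m] x = x} : ℝ) := by exact_mod_cast hb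
        have hlog : ((m / (n + p) : ℕ) : ℝ) * Real.log s.card
            ≤ Real.log (Nat.card {x : X | (⇑f)^[m] x = x}) := by
          rw [← Real.log_pow]
          exact Real.log_le_log (by positivity) hb'
        gcongr
      have hT : Tendsto (fun m : ℕ => (((m / (n + p) : ℕ) : ℝ) * Real.log s.card / m))
          atTop (𝓝 (Real.log s.card / ((n : ℝ) + p))) := by
        apply tendsto_of_tendsto_of_tendsto_of_le_of_le'
          (g := fun m : ℕ => (1 / ((n : ℝ) + p) - 1 / m) * Real.log s.card)
          (h := fun _ : ℕ => Real.log s.card / ((n : ℝ) + p))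
        · have h1 : Tendsto (fun m : ℕ => 1 / ((n : ℝ) + p) - 1 / m) atTop
              (𝓝 (1 / ((n : ℝ) + p) - 0)) :=
            tendsto_const_nhds.sub tendsto_one_div_atTop_nhds_zero_nat
          have h2 := h1.mul_const (Real.log s.card)
          rw [sub_zero, one_div_mul_eq_div] at h2
          exact h2
        · exact tendsto_const_nhds
        · filter_upwards [eventually_ge_atTop 1] with m hm
          have hm0 : (0 : ℝ) < m := by exact_mod_cast hm
          have hq1 : (m : ℝ) / ((n : ℝ) + p) - 1 ≤ ((m / (n + p) : ℕ) : ℝ) := by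
            have h3 : m < ((m / (n + p) : ℕ) + 1) * (n + p) := by
              have h4 := Nat.div_add_mod m (n + p)
              have h5 := Nat.mod_lt m (show 0 < n + p by omega)
              have h6 : ((m / (n + p) : ℕ) + 1) * (n + p)
                  = (n + p) * (m / (n + p) : ℕ) + (n + p) := by ring
              omega
            have h4 : (m : ℝ) < (((m / (n + p) : ℕ) : ℝ) + 1) * ((n : ℝ) + p) := by
              exact_mod_cast h3
            have h5 : (m : ℝ) / ((n : ℝ) + p) < ((m / (n + p) : ℕ) : ℝ) + 1 :=
              (div_lt_iff₀ hnp).2 (by linarith)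
            linarith
          have e1 : (1 / ((n : ℝ) + p) - 1 / (m : ℝ)) * Real.log s.card
              = (((m : ℝ) / ((n : ℝ) + p) - 1) * Real.log s.card) / m := by
            field_simp
            try ring
          rw [e1]
          gcongr
        · filter_upwards [eventually_ge_atTop 1] with m hm
          have hm0 : (0 : ℝ) < m := by exact_mod_cast hm
          have hq2 : ((m / (n + p) : ℕ) : ℝ) ≤ (m : ℝ) / ((n : ℝ) + p) := by
            have h7 : ((m / (n + p) : ℕ) : ℝ) ≤ (m : ℝ) / ((n + p : ℕ) : ℝ) := Nat.cast_div_le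
            push_cast at h7
            exact h7
          calc ((m / (n + p) : ℕ) : ℝ) * Real.log s.card / m
              ≤ ((m : ℝ) / ((n : ℝ) + p)) * Real.log s.card / m := by gcongr
            _ = Real.log s.card / ((n : ℝ) + p) := by field_simp
      have hliminf : ((Real.log s.card / ((n : ℝ) + p) : ℝ) : EReal) ≤ atTop.liminf v := by
        have hT' : Tendsto
            (fun m : ℕ => ((((m / (n + p) : ℕ) : ℝ) * Real.log s.card / m : ℝ) : EReal))
            atTop (𝓝 ((Real.log s.card / ((n : ℝ) + p) : ℝ) : EReal)) := by
          rw [EReal.tendsto_coe]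
          exact hT
        calc ((Real.log s.card / ((n : ℝ) + p) : ℝ) : EReal)
            = atTop.liminf
              (fun m : ℕ => ((((m / (n + p) : ℕ) : ℝ) * Real.log s.card / m : ℝ) : EReal)) :=
              (hT'.liminf_eq).symm
          _ ≤ atTop.liminf v := liminf_le_liminf hseq
      rw [← hLr, EReal.coe_le_coe_iff] at hliminf
      rw [div_le_iff₀ hnp] at hliminf
      calc Real.log s.card ≤ Lr * ((n : ℝ) + p) := hliminf
        _ = ((n : ℝ) + p) * Lr := mul_comm _ _
    -- conclude the lower bound for this entourage
    rw [← hLr]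
    have hub2 : ∀ᶠ n : ℕ in atTop,
        ENNReal.log (netMaxcard ⇑f Set.univ U n : ENNReal) / (n : EReal)
          ≤ (((((n : ℝ) + p) * Lr) / n : ℝ) : EReal) := by
      filter_upwards [eventually_ge_atTop 1] with n hn
      have hn0 : (0 : ℝ) < n := by exact_mod_cast hn
      obtain ⟨t, ht, htc⟩ := (netMaxcard_finite_iff ⇑f Set.univ U n).1 (hfin' n hn)
      rw [← htc]
      rcases Nat.eq_zero_or_pos t.card with h0 | hpos
      · rw [h0]
        simp only [Nat.cast_zero, ENat.toENNReal_zero, ENNReal.log_zero]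
        rw [EReal.bot_div_of_pos_ne_top (by exact_mod_cast hn0) (EReal.natCast_ne_top n)]
        exact bot_le
      · rw [ENat.toENNReal_coe, BowenAux.logNat _ hpos, ← EReal.coe_coe_eq_natCast,
          ← EReal.coe_div, EReal.coe_le_coe_iff]
        have h1 := key1 n hn t ht
        gcongr
    have hT2 : Tendsto (fun n : ℕ => (((((n : ℝ) + p) * Lr) / n : ℝ) : EReal)) atTop
        (𝓝 ((Lr : ℝ) : EReal)) := by
      rw [EReal.tendsto_coe]
      have h1 : Tendsto (fun n : ℕ => Lr + (p * Lr) * (1 / n)) atTop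
          (𝓝 (Lr + (p * Lr) * 0)) :=
        tendsto_const_nhds.add (tendsto_const_nhds.mul tendsto_one_div_atTop_nhds_zero_nat)
      rw [mul_zero, add_zero] at h1
      refine Tendsto.congr' ?_ h1
      filter_upwards [eventually_ge_atTop 1] with n hn
      have hn0 : (0 : ℝ) < n := by exact_mod_cast hn
      field_simp
    have hfinal : atTop.limsup
        (fun n : ℕ => ENNReal.log (netMaxcard ⇑f Set.univ U n : ENNReal) / (n : EReal))
        ≤ ((Lr : ℝ) : EReal) :=
      (limsup_le_limsup hub2).trans (le_of_eq hT2.limsup_eq)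
    exact hfinal
  -- combining
  have hle1 : coverEntropy ⇑f Set.univ ≤ atTop.liminf v := by
    rw [coverEntropy_eq_iSup_netEntropyEntourage]
    exact iSup₂_le hlow
  have heq1 : atTop.limsup v = coverEntropy ⇑f Set.univ :=
    le_antisymm hup (hle1.trans liminf_le_limsup)
  have heq2 : atTop.liminf v = coverEntropy ⇑f Set.univ :=
    le_antisymm (le_trans liminf_le_limsup heq1.le) hle1
  have hvt : Tendsto v atTop (𝓝 (coverEntropy ⇑f Set.univ)) :=
    tendsto_of_liminf_eq_limsup heq2 heq1
  have hnetop : coverEntropy ⇑f Set.univ ≠ ⊤ := by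
    rw [← heq1]
    exact (hup0.trans_lt hufin).ne
  have hnebot : coverEntropy ⇑f Set.univ ≠ ⊥ := by
    have h := coverEntropy_nonneg ⇑f (Set.univ_nonempty (α := X))
    intro hbot
    rw [hbot] at h
    simp at h
  have hEeq : (((coverEntropy ⇑f Set.univ).toReal : ℝ) : EReal) = coverEntropy ⇑f Set.univ :=
    EReal.coe_toReal hnetop hnebot
  have hureal : Tendsto (fun m : ℕ => Real.log (Nat.card {x : X | (⇑f)^[m] x = x}) / m) atTop
      (𝓝 ((coverEntropy ⇑f Set.univ).toReal)) := by
    rw [← EReal.tendsto_coe]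
    rw [hEeq]
    refine Tendsto.congr' ?_ hvt
    filter_upwards [eventually_ge_atTop 1] with m hm
    exact hvrepr m hm
  have hexp2 : Tendsto (fun m : ℕ => Real.exp (Real.log (Nat.card {x : X | (⇑f)^[m] x = x}) / m))
      atTop (𝓝 (Real.exp ((coverEntropy ⇑f Set.univ).toReal))) :=
    (Real.continuous_exp.tendsto _).comp hureal
  refine Tendsto.congr' ?_ hexp2
  filter_upwards [eventually_ge_atTop 1] with n hn
  rw [show {x : X | (⇑α)^[n] x = (⇑β)^[n] x} = {x : X | (⇑f)^[n] x = x} from hFixSet n]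
  rw [Real.rpow_def_of_pos (by exact_mod_cast hP1 n hn), mul_one_div]
end
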